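/- arXiv:1409.5934 — 8 statements merged into one kernel-verified Lean document; each statement's English description precedes it below -/
import Mathlib

section
/- Let K be a field and C a K-linear category admitting all small colimits. Let Γ be a small full subcategory of C such that every object of Γ is tiny and Γ spans C. Then the restricted linear Yoneda functor from C to the category of K-linear functors Γᵒᵖ → ModuleCat K, sending an object Y of C to the K-linear presheaf X ↦ Hom_C(X, Y) on Γ, is an equivalence of categories (fully faithful and essentially surjective onto the K-linear functors). -/
open CategoryTheory CategoryTheory.Limits Opposite

universe v u

/-- An object `X` of a `K`-linear category is *tiny* if the `K`-linear hom-functor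
`Hom_C(X, -) : C ⥤ ModuleCat K` preserves all small colimits. -/
def IsTiny (K : Type v) [Field K] {C : Type u} [Category.{v} C] [Preadditive C]
    [CategoryTheory.Linear K C] (X : C) : Prop :=
  Nonempty (PreservesColimits ((linearCoyoneda K C).obj (op X)))

/-- A family of objects `P` *spans* `C` if every object of `C` is the colimit of some small
diagram all of whose objects satisfy `P`. -/
def Spans {C : Type u} [Category.{v} C] (P : C → Prop) : Prop :=
  ∀ Y : C, ∃ (J : Type v) (_ : SmallCategory J) (F : J ⥤ C),
    (∀ j, P (F.obj j)) ∧
      ∃ ι : F ⟶ (Functor.const J).obj Y, Nonempty (IsColimit (Cocone.mk Y ι))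

/-- A presheaf `F : Γᵒᵖ ⥤ ModuleCat K` on a `K`-linear category `Γ` is *`K`-linear* if it is
additive and its action on hom-modules is `K`-linear. -/
def IsLinearPresheaf (K : Type v) [Field K] {Γ : Type*} [Category Γ] [Preadditive Γ]
    [CategoryTheory.Linear K Γ] (F : Γᵒᵖ ⥤ ModuleCat.{v} K) : Prop :=
  F.Additive ∧ ∀ ⦃X Y : Γ⦄ (r : K) (f : X ⟶ Y), F.map (r • f).op = r • F.map f.op

/-- The restricted linear Yoneda functor, sending `Y : C` to the `K`-linear presheaf
`X ↦ Hom_C(X, Y)` on the full subcategory of objects satisfying `P`. -/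
noncomputable def restrictedLinearYoneda (K : Type v) [Field K] (C : Type u) [Category.{v} C]
    [Preadditive C] [CategoryTheory.Linear K C] (P : C → Prop) :
    C ⥤ ((ObjectProperty.FullSubcategory P)ᵒᵖ ⥤ ModuleCat.{v} K) :=
  linearYoneda K C ⋙
    (Functor.whiskeringLeft (ObjectProperty.FullSubcategory P)ᵒᵖ Cᵒᵖ (ModuleCat.{v} K)).obj
      (ObjectProperty.ι P).op

namespace RLYAux

variable {K : Type v} [Field K] {C : Type u} [Category.{v} C] [Preadditive C]
  [CategoryTheory.Linear K C] {P : C → Prop}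

theorem rly_map_app {Y Z : C} (f : Y ⟶ Z) (A : (ObjectProperty.FullSubcategory P)ᵒᵖ) (u : A.unop.obj ⟶ Y) :
    ((restrictedLinearYoneda K C P).map f).app A u = u ≫ f := rfl

theorem rly_obj_map {Y : C} {A A' : ObjectProperty.FullSubcategory P} (g : A' ⟶ A) (u : A.obj ⟶ Y) :
    ((restrictedLinearYoneda K C P).obj Y).map g.op u =
      (show A'.obj ⟶ A.obj from g.hom) ≫ u := rfl

theorem rly_linear (Y : C) : IsLinearPresheaf K ((restrictedLinearYoneda K C P).obj Y) := by
  constructor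
  · have : ((ObjectProperty.ι P).op ⋙ (linearYoneda K C).obj Y).Additive :=
      inferInstance
    exact this
  · intro X Z r f
    ext u
    have h2 : (r • ((restrictedLinearYoneda K C P).obj Y).map f.op) u =
        r • (((restrictedLinearYoneda K C P).obj Y).map f.op u) := rfl
    rw [h2]; change (r • f.hom) ≫ u = r • (f.hom ≫ u)
    exact CategoryTheory.Linear.smul_comp _ _ _ _ _ _

section FF
variable [HasColimits C]

theorem rly_faithful (hspan : Spans P) : (restrictedLinearYoneda K C P).Faithful := by
  constructor
  intro Y Z f f' h
  obtain ⟨J, hJ, F, hF, ic, ⟨hc⟩⟩ := hspan Y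
  apply hc.hom_ext
  intro j
  have h0 := congrArg (fun (η : (restrictedLinearYoneda K C P).obj Y ⟶
      (restrictedLinearYoneda K C P).obj Z) => η.app (op ⟨F.obj j, hF j⟩)) h
  have h1 := ConcreteCategory.congr_hom h0 (ic.app j)
  exact h1

theorem rly_full (htiny : ∀ X : C, P X → IsTiny K X) (hspan : Spans P) :
    (restrictedLinearYoneda K C P).Full := by
  constructor
  intro Y Z η
  obtain ⟨J, hJ, F, hF, ic, ⟨hc⟩⟩ := hspan Y
  let g : ∀ j, F.obj j ⟶ Z := fun j => η.app (op ⟨F.obj j, hF j⟩) (ic.app j)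
  have hg : ∀ {j j' : J} (a : j ⟶ j'), F.map a ≫ g j' = g j := by
    intro j j' a
    have hnat := η.naturality
      (show (⟨F.obj j, hF j⟩ : ObjectProperty.FullSubcategory P) ⟶ ⟨F.obj j', hF j'⟩ from ObjectProperty.homMk (F.map a)).op
    have h1 := ConcreteCategory.congr_hom hnat (ic.app j')
    have key : η.app (op ⟨F.obj j, hF j⟩) (F.map a ≫ ic.app j')
        = F.map a ≫ η.app (op ⟨F.obj j', hF j'⟩) (ic.app j') := h1
    have h2 : F.map a ≫ ic.app j' = ic.app j := by simpa using ic.naturality a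
    rw [h2] at key
    exact key.symm
  let s : Cocone F := ⟨Z, ⟨g, by intro j j' a; simpa using hg a⟩⟩
  refine ⟨hc.desc s, ?_⟩
  apply NatTrans.ext
  funext A
  obtain ⟨pc⟩ := htiny A.unop.obj A.unop.property
  have hA := isColimitOfPreserves ((linearCoyoneda K C).obj (op A.unop.obj)) hc
  apply hA.hom_ext
  intro j
  ext v
  change A.unop.obj ⟶ F.obj j at v
  have hv : (v ≫ ic.app j) ≫ hc.desc s = v ≫ g j := by
    rw [Category.assoc, hc.fac s j]
  have hnat := η.naturality
    (show A.unop ⟶ (⟨F.obj j, hF j⟩ : ObjectProperty.FullSubcategory P) from ObjectProperty.homMk v).op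
  have h1 := ConcreteCategory.congr_hom hnat (ic.app j)
  have key : η.app A (v ≫ ic.app j)
      = v ≫ η.app (op ⟨F.obj j, hF j⟩) (ic.app j) := h1
  show ((v ≫ ic.app j) ≫ hc.desc s : A.unop.obj ⟶ Z) = η.app A (v ≫ ic.app j)
  rw [hv, key]

end FF

section ES
variable {K : Type v} [Field K] {C : Type u} [Category.{v} C] [Preadditive C]
  [CategoryTheory.Linear K C] {P : C → Prop}
variable (G : (ObjectProperty.FullSubcategory P)ᵒᵖ ⥤ ModuleCat.{v} K)

/-- Objects of the "additive category of elements" of `G`. -/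
structure E : Type (max u v) where
  n : ℕ
  X : Fin n → ObjectProperty.FullSubcategory P
  x : ∀ i, G.obj (op (X i))

variable {G}

/-- Morphisms: matrices compatible with the elements. -/
@[ext] structure EHom (O O' : E G) : Type v where
  m : ∀ i j, O.X i ⟶ O'.X j
  w : ∀ i, O.x i = ∑ j, G.map (m i j).op (O'.x j)

section helpers
variable [G.Additive]

theorem Gzero {A B : ObjectProperty.FullSubcategory P} (y : G.obj (op B)) :
    G.map (0 : A ⟶ B).op y = 0 := by
  have h : ((0 : A ⟶ B).op) = (0 : op B ⟶ op A) := rfl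
  rw [h, G.map_zero]
  rfl

theorem Gadd {A B : ObjectProperty.FullSubcategory P} (a b : A ⟶ B) (y : G.obj (op B)) :
    G.map (a + b).op y = G.map a.op y + G.map b.op y := by
  rw [op_add, G.map_add]
  rfl

theorem Gsum {A B : ObjectProperty.FullSubcategory P} {ι : Type*} (s : Finset ι) (f : ι → (A ⟶ B))
    (y : G.obj (op B)) :
    G.map (∑ j ∈ s, f j).op y = ∑ j ∈ s, G.map (f j).op y := by
  classical
  induction s using Finset.induction with
  | empty => rw [Finset.sum_empty, Finset.sum_empty]; exact Gzero y
  | insert _ _ h ih =>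
      rw [Finset.sum_insert h, Finset.sum_insert h, Gadd, ih]

theorem Gcomp {A B D : ObjectProperty.FullSubcategory P} (a : A ⟶ B) (b : B ⟶ D) (y : G.obj (op D)) :
    G.map (a ≫ b).op y = G.map a.op (G.map b.op y) := by
  rw [op_comp, G.map_comp]
  rfl

theorem Gid {A : ObjectProperty.FullSubcategory P} (y : G.obj (op A)) : G.map (𝟙 A).op y = y := by
  rw [op_id, G.map_id]
  rfl

/-- Reinterpret an ambient morphism as a morphism of the full subcategory. -/
def toG {A B : ObjectProperty.FullSubcategory P} (t : A.obj ⟶ B.obj) : A ⟶ B := ObjectProperty.homMk t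

/-- Reinterpret a morphism of the full subcategory as an ambient morphism. -/
def toC {A B : ObjectProperty.FullSubcategory P} (t : A ⟶ B) : A.obj ⟶ B.obj := t.hom

theorem toG_add {A B : ObjectProperty.FullSubcategory P} (a b : A.obj ⟶ B.obj) :
    toG (a + b) = toG a + toG b := by
  ext; rfl

theorem toG_smul {A B : ObjectProperty.FullSubcategory P} (r : K) (a : A.obj ⟶ B.obj) :
    toG (r • a) = r • toG a := by
  ext; rfl

theorem toG_sum {A B : ObjectProperty.FullSubcategory P} {ι : Type*} (s : Finset ι)
    (f : ι → (A.obj ⟶ B.obj)) : toG (∑ j ∈ s, f j) = ∑ j ∈ s, toG (f j) := by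
  classical
  induction s using Finset.induction with
  | empty => rw [Finset.sum_empty, Finset.sum_empty]; rfl
  | insert _ _ h ih => rw [Finset.sum_insert h, Finset.sum_insert h, toG_add, ih]

theorem toC_sum {A B : ObjectProperty.FullSubcategory P} {ι : Type*} (s : Finset ι)
    (f : ι → (A ⟶ B)) : toC (∑ j ∈ s, f j) = ∑ j ∈ s, toC (f j) := by
  classical
  induction s using Finset.induction with
  | empty => rw [Finset.sum_empty, Finset.sum_empty]; rfl
  | insert _ _ h ih => rw [Finset.sum_insert h, Finset.sum_insert h, ← ih]; rfl

theorem Geq {A B : ObjectProperty.FullSubcategory P} {t₁ t₂ : A.obj ⟶ B.obj} (h : t₁ = t₂)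
    (y : G.obj (op B)) :
    G.map (toG t₁).op y = G.map (toG t₂).op y := by rw [h]

end helpers

variable [G.Additive]

instance : Category.{v} (E G) where
  Hom := EHom
  id O := ⟨fun i j => if h : i = j then eqToHom (congrArg O.X h) else 0, by
    intro i
    dsimp only
    rw [Finset.sum_eq_single i]
    · rw [dif_pos rfl]
      have : eqToHom (congrArg O.X (rfl : i = i)) = 𝟙 (O.X i) := eqToHom_refl _ _
      rw [this, Gid]
    · intro j _ hj
      rw [dif_neg fun h => hj h.symm, Gzero]
    · intro h
      exact absurd (Finset.mem_univ i) h⟩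
  comp {O O' O''} f g := ⟨fun i k => ∑ j, f.m i j ≫ g.m j k, by
    intro i
    rw [f.w i]
    calc ∑ j, G.map (f.m i j).op (O'.x j)
        = ∑ j, G.map (f.m i j).op (∑ k, G.map (g.m j k).op (O''.x k)) := by
          refine Finset.sum_congr rfl fun j _ => by rw [← g.w j]
      _ = ∑ j, ∑ k, G.map (f.m i j).op (G.map (g.m j k).op (O''.x k)) := by
          refine Finset.sum_congr rfl fun j _ => map_sum _ _ _
      _ = ∑ k, ∑ j, G.map (f.m i j).op (G.map (g.m j k).op (O''.x k)) := Finset.sum_comm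
      _ = ∑ k, G.map (∑ j, f.m i j ≫ g.m j k).op (O''.x k) := by
          refine Finset.sum_congr rfl fun k _ => ?_
          rw [Gsum]
          exact Finset.sum_congr rfl fun j _ => (Gcomp _ _ _).symm⟩
  id_comp f := by
    apply EHom.ext
    funext i k
    show (∑ j, (if h : i = j then eqToHom (congrArg _ h) else 0) ≫ f.m j k) = f.m i k
    rw [Finset.sum_eq_single i]
    · rw [dif_pos rfl, eqToHom_refl, Category.id_comp]
    · intro j _ hj
      rw [dif_neg fun h => hj h.symm, Limits.zero_comp]
    · intro h
      exact absurd (Finset.mem_univ i) h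
  comp_id f := by
    apply EHom.ext
    funext i k
    show (∑ j, f.m i j ≫ (if h : j = k then eqToHom (congrArg _ h) else 0)) = f.m i k
    rw [Finset.sum_eq_single k]
    · rw [dif_pos rfl, eqToHom_refl, Category.comp_id]
    · intro j _ hj
      rw [dif_neg hj, Limits.comp_zero]
    · intro h
      exact absurd (Finset.mem_univ k) h
  assoc f g h := by
    apply EHom.ext
    funext i l
    show (∑ k, (∑ j, f.m i j ≫ g.m j k) ≫ h.m k l)
        = ∑ j, f.m i j ≫ ∑ k, g.m j k ≫ h.m k l
    simp only [Preadditive.sum_comp, Preadditive.comp_sum, Category.assoc]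
    exact Finset.sum_comm

theorem EHom_id_m (O : E G) (i j : Fin O.n) :
    (𝟙 O : EHom O O).m i j = if h : i = j then eqToHom (congrArg O.X h) else 0 := rfl

theorem EHom_comp_m {O O' O'' : E G} (f : O ⟶ O') (g : O' ⟶ O'') (i k) :
    (f ≫ g).m i k = ∑ j, f.m i j ≫ g.m j k := rfl

variable (G) [HasFiniteBiproducts C]

/-- The diagram in `C` indexed by `E G`. -/
noncomputable def DD : E G ⥤ C where
  obj O := ⨁ fun i => (O.X i).obj
  map {O O'} f := biproduct.matrix fun i j => ((f.m i j).hom : (O.X i).obj ⟶ (O'.X j).obj)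
  map_id O := by
    apply biproduct.hom_ext
    intro j
    rw [biproduct.matrix_π, Category.id_comp]
    apply biproduct.hom_ext'
    intro i
    rw [biproduct.ι_desc, biproduct.ι_π, EHom_id_m]
    by_cases h : i = j
    · subst h
      rw [dif_pos rfl, dif_pos rfl, eqToHom_refl, eqToHom_refl]
      try rfl
    · rw [dif_neg h, dif_neg h]
      try rfl
  map_comp {O O' O''} f g := by
    apply biproduct.hom_ext
    intro k
    rw [biproduct.matrix_π]
    apply biproduct.hom_ext'
    intro i
    rw [biproduct.ι_desc, Category.assoc, biproduct.matrix_π, biproduct.ι_matrix_assoc,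
      biproduct.lift_desc, EHom_comp_m]
    exact toC_sum _ _



variable {G}
set_option linter.unusedSectionVars false

theorem comp_desc {A : C} {n : ℕ} {X : Fin n → C} {B : C} (f : A ⟶ ⨁ X) (h : ∀ i, X i ⟶ B) :
    f ≫ biproduct.desc h = ∑ i, (f ≫ biproduct.π X i) ≫ h i := by
  calc f ≫ biproduct.desc h = f ≫ 𝟙 (⨁ X) ≫ biproduct.desc h := by rw [Category.id_comp]
    _ = f ≫ (∑ i, biproduct.π X i ≫ biproduct.ι X i) ≫ biproduct.desc h := by
        rw [biproduct.total]
    _ = ∑ i, (f ≫ biproduct.π X i) ≫ h i := by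
        simp only [Preadditive.sum_comp, Preadditive.comp_sum, Category.assoc, biproduct.ι_desc]

/-- The `i`-th projection out of the biproduct `DD G O`. -/
noncomputable def DDπ (O : E G) (i : Fin O.n) : (DD G).obj O ⟶ (O.X i).obj :=
  biproduct.π _ i

theorem DD_map_eq {O O' : E G} (mm : O ⟶ O') :
    (DD G).map mm = biproduct.matrix (f := fun i => (O.X i).obj) (g := fun j => (O'.X j).obj)
      (fun i j => toC (mm.m i j)) :=
  rfl

/-- The value of the leg of the comparison cocone. -/
noncomputable def ellFun (A : ObjectProperty.FullSubcategory P) (O : E G) (f : A.obj ⟶ (DD G).obj O) :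
    G.obj (op A) :=
  ∑ i, G.map (toG (f ≫ DDπ O i)).op (O.x i)

theorem Gsmul (hsm : ∀ ⦃X Y : ObjectProperty.FullSubcategory P⦄ (r : K) (f : X ⟶ Y),
      G.map (r • f).op = r • G.map f.op)
    {A B : ObjectProperty.FullSubcategory P} (r : K) (a : A ⟶ B) (y : G.obj (op B)) :
    G.map (r • a).op y = r • G.map a.op y := by
  rw [hsm r a]
  rfl

theorem ellFun_add (A : ObjectProperty.FullSubcategory P) (O : E G) (f g : A.obj ⟶ (DD G).obj O) :
    ellFun A O (f + g) = ellFun A O f + ellFun A O g := by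
  unfold ellFun
  rw [← Finset.sum_add_distrib]
  refine Finset.sum_congr rfl fun i _ => ?_
  exact (Geq (Preadditive.add_comp _ _ _ _ _ _) (O.x i)).trans
    ((toG_add (f ≫ DDπ O i) (g ≫ DDπ O i)) ▸ Gadd (toG (f ≫ DDπ O i)) (toG (g ≫ DDπ O i)) (O.x i))

theorem ellFun_smul (hsm : ∀ ⦃X Y : ObjectProperty.FullSubcategory P⦄ (r : K) (f : X ⟶ Y),
      G.map (r • f).op = r • G.map f.op)
    (A : ObjectProperty.FullSubcategory P) (O : E G) (r : K) (f : A.obj ⟶ (DD G).obj O) :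
    ellFun A O (r • f) = r • ellFun A O f := by
  unfold ellFun
  rw [Finset.smul_sum]
  refine Finset.sum_congr rfl fun i _ => ?_
  exact (Geq (CategoryTheory.Linear.smul_comp _ _ _ _ _ _) (O.x i)).trans
    ((toG_smul r (f ≫ DDπ O i)) ▸ Gsmul hsm r (toG (f ≫ DDπ O i)) (O.x i))

theorem ellFun_comp (A : ObjectProperty.FullSubcategory P) {O O' : E G} (mm : O ⟶ O')
    (f : A.obj ⟶ (DD G).obj O) :
    ellFun A O' (f ≫ (DD G).map mm) = ellFun A O f := by
  unfold ellFun
  have e1 : ∀ j : Fin O'.n, (f ≫ (DD G).map mm) ≫ DDπ O' j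
      = ∑ i, (f ≫ DDπ O i) ≫ toC (mm.m i j) := by
    intro j
    rw [Category.assoc, DD_map_eq mm]
    show f ≫ biproduct.matrix _ ≫ biproduct.π _ j = _
    erw [biproduct.matrix_π, comp_desc]
    rfl
  calc ∑ j, G.map (toG ((f ≫ (DD G).map mm) ≫ DDπ O' j)).op (O'.x j)
      = ∑ j, ∑ i, G.map (toG (f ≫ DDπ O i)).op
          (G.map (mm.m i j).op (O'.x j)) := by
        refine Finset.sum_congr rfl fun j _ => ?_
        refine ((Geq (e1 j) (O'.x j)).trans ?_)
        rw [toG_sum]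
        refine (Gsum Finset.univ (fun i => (toG (f ≫ DDπ O i)) ≫ mm.m i j)
            (O'.x j)).trans ?_
        exact Finset.sum_congr rfl fun i _ => Gcomp _ _ _
    _ = ∑ i, ∑ j, G.map (toG (f ≫ DDπ O i)).op
          (G.map (mm.m i j).op (O'.x j)) := Finset.sum_comm
    _ = ∑ i, G.map (toG (f ≫ DDπ O i)).op (O.x i) := by
        refine Finset.sum_congr rfl fun i _ => ?_
        rw [← map_sum]
        exact congrArg _ (mm.w i).symm

theorem ellFun_pre {A A' : ObjectProperty.FullSubcategory P} (g : A' ⟶ A) (O : E G)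
    (f : A.obj ⟶ (DD G).obj O) :
    ellFun A' O (g.hom ≫ f) = G.map g.op (ellFun A O f) := by
  unfold ellFun
  rw [map_sum]
  refine Finset.sum_congr rfl fun i _ => ?_
  exact (Geq (Category.assoc _ _ _) (O.x i)).trans
    (Gcomp g (toG (f ≫ DDπ O i)) (O.x i))

/-- The leg as a morphism of modules. -/
noncomputable def ell (hsm : ∀ ⦃X Y : ObjectProperty.FullSubcategory P⦄ (r : K) (f : X ⟶ Y),
      G.map (r • f).op = r • G.map f.op)
    (A : ObjectProperty.FullSubcategory P) (O : E G) :
    ((linearCoyoneda K C).obj (op A.obj)).obj ((DD G).obj O) ⟶ G.obj (op A) :=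
  show ModuleCat.of K (A.obj ⟶ (DD G).obj O) ⟶ ModuleCat.of K (G.obj (op A)) from ModuleCat.ofHom
    { toFun := fun f => ellFun A O f
      map_add' := fun f g => ellFun_add A O f g
      map_smul' := fun r f => ellFun_smul hsm A O r f }

/-- The comparison cocone with apex `G (op A)`. -/
noncomputable def cg (hsm : ∀ ⦃X Y : ObjectProperty.FullSubcategory P⦄ (r : K) (f : X ⟶ Y),
      G.map (r • f).op = r • G.map f.op) (A : ObjectProperty.FullSubcategory P) :
    Cocone (DD G ⋙ (linearCoyoneda K C).obj (op A.obj)) where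
  pt := G.obj (op A)
  ι :=
    { app := fun O => ell hsm A O
      naturality := fun O O' mm => by
        set_option maxHeartbeats 1000000 in
        ext f
        set_option maxHeartbeats 1000000 in
        show ellFun A O' ((f : A.obj ⟶ (DD G).obj O) ≫ (DD G).map mm) = ellFun A O f
        exact ellFun_comp A mm f }

/-- Single-object element of `E G`. -/
@[reducible] def singleO (A : ObjectProperty.FullSubcategory P) (x : G.obj (op A)) : E G :=
  ⟨1, fun _ => A, fun _ => x⟩

noncomputable def inc (A : ObjectProperty.FullSubcategory P) (x : G.obj (op A)) :
    A.obj ⟶ (DD G).obj (singleO A x) :=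
  biproduct.lift (f := fun _ : Fin 1 => A.obj) fun _ => 𝟙 A.obj

theorem ellFun_inc (A : ObjectProperty.FullSubcategory P) (x : G.obj (op A)) :
    ellFun A (singleO A x) (inc A x) = x := by
  unfold ellFun
  rw [Fin.sum_univ_one]
  exact (Geq (t₂ := 𝟙 A.obj) (by simp [inc, DDπ]; erw [biproduct.lift_π]) x).trans (Gid x)

/-- The canonical morphism out of a single-object element. -/
noncomputable def sigHomE (A : ObjectProperty.FullSubcategory P) (O : E G) (f : A.obj ⟶ (DD G).obj O) :
    singleO A (ellFun A O f) ⟶ O :=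
  ⟨fun _ j => toG (f ≫ DDπ O j), fun _ => rfl⟩

theorem inc_comp {A : ObjectProperty.FullSubcategory P} {x : G.obj (op A)} {O : E G}
    (mm : singleO A x ⟶ O) :
    inc A x ≫ (DD G).map mm
      = biproduct.lift (f := fun j => (O.X j).obj) (fun j => toC (mm.m 0 j)) := by
  apply biproduct.hom_ext
  intro j
  erw [Category.assoc, DD_map_eq mm]
  show inc A x ≫ biproduct.matrix _ ≫ biproduct.π _ j = _
  erw [biproduct.matrix_π, biproduct.lift_π]
  show biproduct.lift (fun _ => 𝟙 A.obj) ≫ biproduct.desc _ = _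
  rw [biproduct.lift_desc, Fin.sum_univ_one, Category.id_comp]

section cocone
variable (cc : Cocone (DD G))

theorem cc_w {O O' : E G} (mm : O ⟶ O') : (DD G).map mm ≫ cc.ι.app O' = cc.ι.app O := by
  have := cc.ι.naturality mm
  simpa using this

/-- The candidate inverse function. -/
noncomputable def sigFun (A : ObjectProperty.FullSubcategory P) (x : G.obj (op A)) : A.obj ⟶ cc.pt :=
  inc A x ≫ cc.ι.app (singleO A x)

theorem sig_leg (A : ObjectProperty.FullSubcategory P) (O : E G) (f : A.obj ⟶ (DD G).obj O) :
    sigFun cc A (ellFun A O f) = f ≫ cc.ι.app O := by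
  have hinc : inc A (ellFun A O f) ≫ (DD G).map (sigHomE A O f) = f := by
    rw [inc_comp]
    apply biproduct.hom_ext
    intro j
    rw [biproduct.lift_π]
    rfl
  calc sigFun cc A (ellFun A O f)
      = inc A (ellFun A O f) ≫ (DD G).map (sigHomE A O f) ≫ cc.ι.app O := by
        rw [cc_w cc (sigHomE A O f)]; rfl
    _ = f ≫ cc.ι.app O := by rw [← Category.assoc, hinc]

end cocone

/-- Two-object element of `E G`. -/
@[reducible] def pairO (A : ObjectProperty.FullSubcategory P) (x y : G.obj (op A)) : E G :=
  ⟨2, fun _ => A, ![x, y]⟩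

def pair12 (A : ObjectProperty.FullSubcategory P) (x y : G.obj (op A)) :
    singleO A (x + y) ⟶ pairO A x y :=
  ⟨fun _ _ => 𝟙 A, by
    intro i
    rw [Fin.sum_univ_two]
    show x + y = G.map (𝟙 A).op x + G.map (𝟙 A).op y
    rw [Gid, Gid]⟩

def pair1 (A : ObjectProperty.FullSubcategory P) (x y : G.obj (op A)) :
    singleO A x ⟶ pairO A x y :=
  ⟨fun _ j => ![𝟙 A, 0] j, by
    intro i
    rw [Fin.sum_univ_two]
    show x = G.map (𝟙 A).op x + G.map (0 : A ⟶ A).op y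
    rw [Gid, Gzero, add_zero]⟩

def pair2 (A : ObjectProperty.FullSubcategory P) (x y : G.obj (op A)) :
    singleO A y ⟶ pairO A x y :=
  ⟨fun _ j => ![0, 𝟙 A] j, by
    intro i
    rw [Fin.sum_univ_two]
    show y = G.map (0 : A ⟶ A).op x + G.map (𝟙 A).op y
    rw [Gid, Gzero, zero_add]⟩

def smul1 (hsm : ∀ ⦃X Y : ObjectProperty.FullSubcategory P⦄ (r : K) (f : X ⟶ Y),
      G.map (r • f).op = r • G.map f.op)
    (A : ObjectProperty.FullSubcategory P) (r : K) (x : G.obj (op A)) :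
    singleO A (r • x) ⟶ singleO A x :=
  ⟨fun _ _ => r • 𝟙 A, by
    intro i
    rw [Fin.sum_univ_one]
    show r • x = G.map (r • 𝟙 A).op x
    rw [Gsmul hsm, Gid]⟩

section cocone2
variable (cc : Cocone (DD G))

theorem sig_add (A : ObjectProperty.FullSubcategory P) (x y : G.obj (op A)) :
    sigFun cc A (x + y) = sigFun cc A x + sigFun cc A y := by
  have h12 : inc A (x + y) ≫ (DD G).map (pair12 A x y)
      = biproduct.lift (f := fun _ : Fin 2 => A.obj) fun _ => 𝟙 A.obj := by
    rw [inc_comp]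
    apply biproduct.hom_ext
    intro j
    rw [biproduct.lift_π, biproduct.lift_π]
    rfl
  have h1 : inc A x ≫ (DD G).map (pair1 A x y)
      = biproduct.lift (f := fun _ : Fin 2 => A.obj) fun j => toC (![𝟙 A, 0] j) :=
    inc_comp _
  have h2 : inc A y ≫ (DD G).map (pair2 A x y)
      = biproduct.lift (f := fun _ : Fin 2 => A.obj) fun j => toC (![0, 𝟙 A] j) :=
    inc_comp _
  have hsum : (biproduct.lift (f := fun _ : Fin 2 => A.obj) fun _ => 𝟙 A.obj)
      = (biproduct.lift (f := fun _ : Fin 2 => A.obj) fun j => toC (![𝟙 A, 0] j))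
        + (biproduct.lift (f := fun _ : Fin 2 => A.obj) fun j => toC (![0, 𝟙 A] j)) := by
    apply biproduct.hom_ext
    intro j
    rw [Preadditive.add_comp, biproduct.lift_π, biproduct.lift_π, biproduct.lift_π]
    fin_cases j
    · show 𝟙 A.obj = toC (𝟙 A) + toC (0 : A ⟶ A)
      rw [show toC (𝟙 A) = 𝟙 A.obj from rfl, show toC (0 : A ⟶ A) = (0 : A.obj ⟶ A.obj) from rfl,
        add_zero]
    · show 𝟙 A.obj = toC (0 : A ⟶ A) + toC (𝟙 A)
      rw [show toC (𝟙 A) = 𝟙 A.obj from rfl, show toC (0 : A ⟶ A) = (0 : A.obj ⟶ A.obj) from rfl,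
        zero_add]
  calc sigFun cc A (x + y)
      = inc A (x + y) ≫ (DD G).map (pair12 A x y) ≫ cc.ι.app (pairO A x y) := by
        rw [cc_w]; rfl
    _ = (inc A (x + y) ≫ (DD G).map (pair12 A x y)) ≫ cc.ι.app (pairO A x y) := by
        rw [Category.assoc]
    _ = ((inc A x ≫ (DD G).map (pair1 A x y)) + (inc A y ≫ (DD G).map (pair2 A x y)))
          ≫ cc.ι.app (pairO A x y) := by
            rw [h12, h1, h2]
            exact congrArg (fun t : A.obj ⟶ (DD G).obj (pairO A x y) => t ≫ cc.ι.app _) hsum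
    _ = sigFun cc A x + sigFun cc A y := by
        rw [Preadditive.add_comp, Category.assoc, Category.assoc, cc_w, cc_w]
        rfl

theorem sig_smul (hsm : ∀ ⦃X Y : ObjectProperty.FullSubcategory P⦄ (r : K) (f : X ⟶ Y),
      G.map (r • f).op = r • G.map f.op)
    (A : ObjectProperty.FullSubcategory P) (r : K) (x : G.obj (op A)) :
    sigFun cc A (r • x) = r • sigFun cc A x := by
  have h1 : inc A (r • x) ≫ (DD G).map (smul1 hsm A r x) = r • inc A x := by
    rw [inc_comp]
    apply biproduct.hom_ext
    intro j
    erw [biproduct.lift_π, CategoryTheory.Linear.smul_comp]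
    erw [show inc A x ≫ biproduct.π (fun _ : Fin 1 => A.obj) j = 𝟙 A.obj from by
      simp [inc]; erw [biproduct.lift_π]]
    rfl
  calc sigFun cc A (r • x)
      = inc A (r • x) ≫ (DD G).map (smul1 hsm A r x) ≫ cc.ι.app (singleO A x) := by
        rw [cc_w]; rfl
    _ = (r • inc A x) ≫ cc.ι.app (singleO A x) := by rw [← Category.assoc, h1]
    _ = r • sigFun cc A x := by rw [CategoryTheory.Linear.smul_comp]; rfl

/-- The candidate inverse, as a morphism of modules. -/
noncomputable def sigHomM (hsm : ∀ ⦃X Y : ObjectProperty.FullSubcategory P⦄ (r : K) (f : X ⟶ Y),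
      G.map (r • f).op = r • G.map f.op) (B : ObjectProperty.FullSubcategory P) :
    G.obj (op B) ⟶ ((linearCoyoneda K C).obj (op B.obj)).obj cc.pt :=
  show ModuleCat.of K (G.obj (op B)) ⟶ ModuleCat.of K (B.obj ⟶ cc.pt) from ModuleCat.ofHom
    { toFun := sigFun cc B
      map_add' := sig_add cc B
      map_smul' := sig_smul cc hsm B }

section eta
variable (hsm : ∀ ⦃X Y : ObjectProperty.FullSubcategory P⦄ (r : K) (f : X ⟶ Y),
      G.map (r • f).op = r • G.map f.op)
variable (hA : ∀ B : ObjectProperty.FullSubcategory P,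
  IsColimit (((linearCoyoneda K C).obj (op B.obj)).mapCocone cc))

theorem desc_fac (B : ObjectProperty.FullSubcategory P) (O : E G) (f : B.obj ⟶ (DD G).obj O) :
    ((hA B).desc (cg hsm B)) (f ≫ cc.ι.app O) = ellFun B O f :=
  ConcreteCategory.congr_hom ((hA B).fac (cg hsm B) O) f

set_option maxHeartbeats 1000000 in
/-- The comparison natural transformation. -/
noncomputable def etaHat : (restrictedLinearYoneda K C P).obj cc.pt ⟶ G where
  app A := (hA A.unop).desc (cg hsm A.unop)
  naturality {A A'} g := by
    apply (hA A.unop).hom_ext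
    intro O
    ext f
    change A.unop.obj ⟶ (DD G).obj O at f
    show ((hA A'.unop).desc (cg hsm A'.unop))
        (((restrictedLinearYoneda K C P).obj cc.pt).map g
          ((f : A.unop.obj ⟶ (DD G).obj O) ≫ cc.ι.app O))
      = G.map g (((hA A.unop).desc (cg hsm A.unop)) (f ≫ cc.ι.app O))
    have e2 : ((restrictedLinearYoneda K C P).obj cc.pt).map g
        ((f : A.unop.obj ⟶ (DD G).obj O) ≫ cc.ι.app O)
        = (toC g.unop ≫ f) ≫ cc.ι.app O := by
      show toC g.unop ≫ (f : A.unop.obj ⟶ (DD G).obj O) ≫ cc.ι.app O = _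
      rw [Category.assoc]
    rw [e2, desc_fac cc hsm hA A'.unop O (toC g.unop ≫ f), desc_fac cc hsm hA A.unop O f]
    exact ellFun_pre g.unop O f

theorem desc_sig (B : ObjectProperty.FullSubcategory P) :
    (hA B).desc (cg hsm B) ≫ sigHomM cc hsm B = 𝟙 _ := by
  apply (hA B).hom_ext
  intro O
  ext f
  show sigFun cc B (((hA B).desc (cg hsm B)) ((f : B.obj ⟶ (DD G).obj O) ≫ cc.ι.app O))
      = f ≫ cc.ι.app O
  rw [desc_fac cc hsm hA B O f]
  exact sig_leg cc B O f

theorem sig_desc (B : ObjectProperty.FullSubcategory P) :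
    sigHomM cc hsm B ≫ (hA B).desc (cg hsm B) = 𝟙 _ := by
  ext x
  show ((hA B).desc (cg hsm B)) (sigFun cc B x) = x
  rw [show sigFun cc B x = inc B x ≫ cc.ι.app (singleO B x) from rfl,
    desc_fac cc hsm hA B (singleO B x) (inc B x)]
  exact ellFun_inc B x

end eta
end cocone2

end ES

section Main
variable {K : Type v} [Field K] {C : Type u} [Category.{v} C] [Preadditive C]
  [CategoryTheory.Linear K C] {P : C → Prop}

set_option linter.unusedSectionVars false in
theorem rly_ess_surj [HasColimits C] [Small.{v} (Subtype P)]
    (htiny : ∀ X : C, P X → IsTiny K X)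
    (G : (ObjectProperty.FullSubcategory P)ᵒᵖ ⥤ ModuleCat.{v} K) (hG : IsLinearPresheaf K G) :
    ∃ Y : C, Nonempty ((restrictedLinearYoneda K C P).obj Y ≅ G) := by
  haveI hGa : G.Additive := hG.1
  have hsm := hG.2
  haveI : HasFiniteBiproducts C := HasFiniteBiproducts.of_hasFiniteCoproducts
  haveI : Small.{v} (ObjectProperty.FullSubcategory P) :=
    small_map (⟨fun O => ⟨O.obj, O.property⟩, fun s => ⟨s.1, s.2⟩, fun _ => rfl, fun _ => rfl⟩ :
      ObjectProperty.FullSubcategory P ≃ Subtype P)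
  haveI : Small.{v} (E G) :=
    small_map (⟨fun O => ⟨O.n, O.X, O.x⟩, fun s => ⟨s.1, s.2.1, s.2.2⟩, fun _ => rfl,
      fun _ => rfl⟩ :
      E G ≃ Σ n : ℕ, Σ X : Fin n → ObjectProperty.FullSubcategory P, ∀ i, (G.obj (op (X i)) : Type v))
  haveI : LocallySmall.{v} (E G) := ⟨fun {_ _} => inferInstance⟩
  haveI : EssentiallySmall.{v} (E G) := essentiallySmall_of_small_of_locallySmall _
  haveI : HasColimitsOfShape (E G) C := hasColimitsOfShape_of_essentiallySmall _ _
  let cc : Cocone (DD G) := colimit.cocone (DD G)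
  let hA : ∀ B : ObjectProperty.FullSubcategory P,
      IsColimit (((linearCoyoneda K C).obj (op B.obj)).mapCocone cc) := fun B =>
    letI := (htiny B.obj B.property).some
    letI : PreservesColimitsOfShape (E G) ((linearCoyoneda K C).obj (op B.obj)) :=
      preservesColimitsOfShape_of_equiv (equivSmallModel (E G)).symm _
    isColimitOfPreserves _ (colimit.isColimit (DD G))
  haveI : ∀ A : (ObjectProperty.FullSubcategory P)ᵒᵖ, IsIso ((etaHat cc hsm hA).app A) := fun A =>
    ⟨sigHomM cc hsm A.unop, desc_sig cc hsm hA A.unop, sig_desc cc hsm hA A.unop⟩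
  haveI : IsIso (etaHat cc hsm hA) := NatIso.isIso_of_isIso_app _
  exact ⟨cc.pt, ⟨asIso (etaHat cc hsm hA)⟩⟩

end Main
end RLYAux

/-- If `Γ` is a small full subcategory of a cocomplete `K`-linear category `C` consisting of
tiny objects and spanning `C`, then the restricted linear Yoneda functor is fully faithful and
essentially surjective onto the `K`-linear presheaves on `Γ`. -/
theorem statement0 (K : Type v) [Field K]
    (C : Type u) [Category.{v} C] [Preadditive C] [CategoryTheory.Linear K C] [HasColimits C]
    (P : C → Prop) [Small.{v} (Subtype P)]
    (htiny : ∀ X : C, P X → IsTiny K X)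
    (hspan : Spans P) :
    (restrictedLinearYoneda K C P).Full ∧ (restrictedLinearYoneda K C P).Faithful ∧
      (∀ Y : C, IsLinearPresheaf K ((restrictedLinearYoneda K C P).obj Y)) ∧
      ∀ G : (ObjectProperty.FullSubcategory P)ᵒᵖ ⥤ ModuleCat.{v} K, IsLinearPresheaf K G →
        ∃ Y : C, Nonempty ((restrictedLinearYoneda K C P).obj Y ≅ G) :=
  ⟨RLYAux.rly_full htiny hspan, RLYAux.rly_faithful hspan,
    fun Y => RLYAux.rly_linear Y, fun G hG => RLYAux.rly_ess_surj htiny G hG⟩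
end

section
/- Let C be an abelian category admitting all small colimits and let X be an object of C. The functor Hom_C(X,−) : C → AddCommGrp preserves all small colimits if and only if X is compact (i.e., Hom_C(X,−) preserves filtered colimits) and X is a projective object of C. -/
open CategoryTheory CategoryTheory.Limits Opposite

universe v u

section Aux

open CategoryTheory.Limits.CoproductsFromFiniteFiltered

universe v' u'

variable {C : Type u} [Category.{v} C] {D : Type u'} [Category.{v'} D]
variable [HasColimits C] (G : C ⥤ D) {α : Type v}

/-- The auxiliary cocone over `liftToFinsetObj F ⋙ G` induced by a cocone over `F ⋙ G`,
given that `G` preserves the relevant finite coproducts. -/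
noncomputable def auxCocone (F : Discrete α ⥤ C) (s : Cocone (F ⋙ G))
    (hJ : ∀ J : Finset (Discrete α),
      IsColimit (G.mapCocone (colimit.cocone (Discrete.functor (fun x : J => F.obj x))))) :
    Cocone (liftToFinsetObj F ⋙ G) where
  pt := s.pt
  ι :=
    { app := fun J => (hJ J).desc
        { pt := s.pt
          ι := Discrete.natTrans fun x => s.ι.app x.as.val }
      naturality := by
        intro J J' h
        apply (hJ J).hom_ext
        rintro ⟨x⟩
        dsimp
        erw [Category.comp_id, ← G.map_comp_assoc, colimit.ι_desc]
        exact ((hJ J').fac ⟨s.pt, Discrete.natTrans fun x => s.ι.app x.as.val⟩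
            ⟨(⟨x.val, h.down.down x.2⟩ : (J' : Type v))⟩).trans
          ((hJ J).fac ⟨s.pt, Discrete.natTrans fun x => s.ι.app x.as.val⟩ ⟨x⟩).symm }

/-- A functor preserving finite colimits and colimits over `Finset (Discrete α)`
preserves coproducts indexed by `α`. -/
lemma aux_preservesCoproducts [PreservesFiniteColimits G]
    (α : Type v) [PreservesColimitsOfShape (Finset (Discrete α)) G] :
    PreservesColimitsOfShape (Discrete α) G := by
  have hsh : ∀ J : Finset (Discrete α), PreservesColimitsOfShape (Discrete (J : Type v)) G :=
    fun J => preservesColimitsOfShape_of_equiv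
      (Discrete.equivalence (Fintype.equivFin (J : Type v))).symm G
  constructor
  intro F
  apply preservesColimit_of_preserves_colimit_cocone (liftToFinsetColimitCocone F).isColimit
  have hLF : IsColimit (G.mapCocone (colimit.cocone (liftToFinsetObj F))) :=
    isColimitOfPreserves G (colimit.isColimit (liftToFinsetObj F))
  have hJ : ∀ J : Finset (Discrete α),
      IsColimit (G.mapCocone (colimit.cocone (Discrete.functor (fun x : J => F.obj x)))) :=
    fun J => isColimitOfPreserves G (colimit.isColimit _)
  refine
    { desc := fun s => hLF.desc (auxCocone G F s hJ)
      fac := ?_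
      uniq := ?_ }
  · intro s j
    have h1 : G.map (colimit.ι (liftToFinsetObj F) ({j} : Finset (Discrete α))) ≫
        hLF.desc (auxCocone G F s hJ) = (auxCocone G F s hJ).ι.app {j} :=
      hLF.fac (auxCocone G F s hJ) {j}
    have h2 : G.map (Sigma.ι (fun x : ({j} : Finset (Discrete α)) => F.obj x)
          (⟨j, by simp⟩ : ({j} : Finset (Discrete α)))) ≫
        (auxCocone G F s hJ).ι.app {j} = s.ι.app j :=
      (hJ {j}).fac _ ⟨(⟨j, by simp⟩ : ({j} : Finset (Discrete α)))⟩
    dsimp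
    erw [G.map_comp, Category.assoc, h1, h2]
  · intro s m hm
    apply hLF.hom_ext
    intro J
    have h1 : G.map (colimit.ι (liftToFinsetObj F) J) ≫
        hLF.desc (auxCocone G F s hJ) = (auxCocone G F s hJ).ι.app J :=
      hLF.fac (auxCocone G F s hJ) J
    show G.map (colimit.ι (liftToFinsetObj F) J) ≫ m =
      G.map (colimit.ι (liftToFinsetObj F) J) ≫ hLF.desc (auxCocone G F s hJ)
    rw [h1]
    apply (hJ J).hom_ext
    rintro ⟨x⟩
    have h2 : G.map (Sigma.ι (fun x : J => F.obj x) x) ≫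
        (auxCocone G F s hJ).ι.app J = s.ι.app x.val :=
      (hJ J).fac _ ⟨x⟩
    show G.map (Sigma.ι (fun x : J => F.obj x) x) ≫
        G.map (colimit.ι (liftToFinsetObj F) J) ≫ m =
      G.map (Sigma.ι (fun x : J => F.obj x) x) ≫ (auxCocone G F s hJ).ι.app J
    rw [h2]
    erw [← G.map_comp_assoc]
    have hx : Sigma.ι (fun x : J => F.obj x) x ≫ colimit.ι (liftToFinsetObj F) J =
        Sigma.ι (fun y : ({x.val} : Finset (Discrete α)) => F.obj y)
            (⟨x.val, by simp⟩ : ({x.val} : Finset (Discrete α))) ≫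
          colimit.ι (liftToFinsetObj F) {x.val} := by
      rw [← colimit.w (liftToFinsetObj F)
        (⟨⟨Finset.singleton_subset_iff.2 x.2⟩⟩ : ({x.val} : Finset (Discrete α)) ⟶ J)]
      dsimp [liftToFinsetObj]
      rw [colimit.ι_desc_assoc]
      rfl
    rw [hx]
    erw [G.map_comp_assoc]
    have h3 := hm x.val
    dsimp at h3
    erw [G.map_comp, Category.assoc] at h3
    exact h3
end Aux

/-- For an object `X` of a cocomplete abelian category `C`, the hom-functor
`Hom_C(X, −) : C ⥤ AddCommGrp` preserves all small colimits if and only if `X` is compact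
(i.e. `Hom_C(X, −)` preserves filtered colimits) and `X` is projective. -/
theorem statement4 (C : Type u) [Category.{v} C] [Abelian C] [HasColimits C] (X : C) :
    PreservesColimits (preadditiveCoyoneda.obj (op X)) ↔
      PreservesFilteredColimits (preadditiveCoyoneda.obj (op X)) ∧ Projective X := by
  constructor
  · intro h
    refine ⟨⟨fun J _ _ => inferInstance⟩, ?_⟩
    rw [Projective.projective_iff_preservesEpimorphisms_preadditiveCoyoneda_obj]
    infer_instance
  · rintro ⟨h1, h2⟩
    have hepi : (preadditiveCoyoneda.obj (op X)).PreservesEpimorphisms :=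
      (Projective.projective_iff_preservesEpimorphisms_preadditiveCoyoneda_obj X).mp h2
    have hhom : (preadditiveCoyoneda.obj (op X)).PreservesHomology :=
      Functor.preservesHomology_of_preservesEpis_and_kernels _
    have hfin : PreservesFiniteColimits (preadditiveCoyoneda.obj (op X)) :=
      Functor.preservesFiniteColimits_of_preservesHomology _
    have hcoprod : ∀ J : Type v,
        PreservesColimitsOfShape (Discrete J) (preadditiveCoyoneda.obj (op X)) := fun J =>
      aux_preservesCoproducts _ J
    exact preservesColimits_of_preservesCoequalizers_and_coproducts _
end

section
/- Let K be a field and let V be a nonzero module over the polynomial ring K[X] on which X acts locally nilpotently, i.e., for every v ∈ V there exists n ∈ ℕ with X^n • v = 0. Then there exist a K[X]-module W on which X acts locally nilpotently and a surjective K[X]-linear map f : W → V that admits no K[X]-linear section, i.e., there is no K[X]-linear map s : V → W with f ∘ s = id_V. (In particular, the category of locally nilpotent K[X]-modules has no nonzero projective objects.) -/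
universe u

/-- If `V` is a nonzero module over `K[X]` on which `X` acts locally nilpotently, then there
is a locally nilpotent `K[X]`-module `W` and a surjective `K[X]`-linear map `W → V` admitting
no `K[X]`-linear section.  (In particular the category of locally nilpotent `K[X]`-modules has
no nonzero projective objects.) -/
theorem statement6 (K : Type u) [Field K]
    (V : Type u) [AddCommGroup V] [Module (Polynomial K) V]
    (hV : ∃ v : V, v ≠ 0)
    (hnil : ∀ v : V, ∃ n : ℕ, (Polynomial.X : Polynomial K) ^ n • v = 0) :
    ∃ W : ModuleCat.{u} (Polynomial K),
      (∀ w : W, ∃ n : ℕ, (Polynomial.X : Polynomial K) ^ n • w = 0) ∧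
      ∃ f : W →ₗ[Polynomial K] V, Function.Surjective f ∧
        ¬ ∃ s : V →ₗ[Polynomial K] W, f.comp s = LinearMap.id := by
  classical
  obtain ⟨v₁, hv₁⟩ := hV
  choose n hn using hnil
  set R := Polynomial K with hR
  let I : V → Ideal R := fun v => Ideal.span {(Polynomial.X : R) ^ (n v + 1)}
  let M : V → Type u := fun v => R ⧸ I v
  have hker : ∀ v : V, I v ≤ LinearMap.ker (LinearMap.toSpanSingleton R V v) := by
    intro v x hx
    rw [Ideal.mem_span_singleton] at hx
    obtain ⟨q, rfl⟩ := hx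
    rw [LinearMap.mem_ker, LinearMap.toSpanSingleton_apply, mul_comm, mul_smul,
      pow_succ', mul_smul, hn v, smul_zero, smul_zero]
  let fv : ∀ v : V, M v →ₗ[R] V := fun v =>
    Submodule.liftQ (I v) (LinearMap.toSpanSingleton R V v) (hker v)
  refine ⟨ModuleCat.of R (DirectSum V M), ?_, DirectSum.toModule R V V fv, ?_, ?_⟩
  · -- local nilpotence
    intro w
    induction w using DirectSum.induction_on with
    | zero => exact ⟨0, smul_zero _⟩
    | of i x =>
        refine ⟨n i + 1, ?_⟩
        obtain ⟨p, rfl⟩ := Submodule.Quotient.mk_surjective (I i) x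
        have h0 : (Polynomial.X : R) ^ (n i + 1) • (Submodule.Quotient.mk p : M i) = 0 := by
          rw [← Submodule.Quotient.mk_smul, Submodule.Quotient.mk_eq_zero]
          exact Ideal.mem_span_singleton.mpr ⟨p, by rw [smul_eq_mul]⟩
        rw [← DirectSum.of_smul, h0, map_zero]
    | add a b ha hb =>
        obtain ⟨ka, hka⟩ := ha
        obtain ⟨kb, hkb⟩ := hb
        refine ⟨ka + kb, ?_⟩
        rw [smul_add]
        rw [show ((Polynomial.X : R) ^ (ka + kb)) • a
            = (Polynomial.X : R) ^ kb • ((Polynomial.X : R) ^ ka • a) by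
          rw [← mul_smul, ← pow_add, add_comm]]
        rw [show ((Polynomial.X : R) ^ (ka + kb)) • b
            = (Polynomial.X : R) ^ ka • ((Polynomial.X : R) ^ kb • b) by
          rw [← mul_smul, ← pow_add]]
        rw [hka, hkb, smul_zero, smul_zero, add_zero]
  · -- surjectivity
    intro v
    refine ⟨DirectSum.lof R V M v (Submodule.Quotient.mk 1), ?_⟩
    erw [DirectSum.toModule_lof]
    show LinearMap.toSpanSingleton R V v 1 = v
    simp
  · -- no section
    rintro ⟨s, hs⟩
    -- find v₀ ≠ 0 with X • v₀ = 0
    have hPex : ∃ k : ℕ, (Polynomial.X : R) ^ k • v₁ = 0 := ⟨n v₁, hn v₁⟩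
    set N := Nat.find hPex with hN
    have hNpos : N ≠ 0 := by
      intro h
      have := Nat.find_spec hPex
      rw [← hN, h, pow_zero, one_smul] at this
      exact hv₁ this
    obtain ⟨k, hk⟩ := Nat.exists_eq_succ_of_ne_zero hNpos
    set v₀ := (Polynomial.X : R) ^ k • v₁ with hv₀
    have hv₀ne : v₀ ≠ 0 := Nat.find_min hPex (by omega)
    have hXv₀ : (Polynomial.X : R) • v₀ = 0 := by
      rw [hv₀, ← mul_smul, ← pow_succ']
      rw [show k + 1 = N by omega]
      exact Nat.find_spec hPex
    set w : DirectSum V M := s v₀ with hw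
    have hfw : DirectSum.toModule R V V fv w = v₀ := by
      have := DFunLike.congr_fun hs v₀
      simpa using this
    have hXw : (Polynomial.X : R) • w = 0 := by
      have h := map_smul s (Polynomial.X : R) v₀
      rw [hXv₀, map_zero] at h
      exact h.symm
    -- componentwise
    have hcomp : ∀ v : V, fv v (w v) = 0 := by
      intro v
      have hX : (Polynomial.X : R) • (w v) = 0 := by
        have : ((Polynomial.X : R) • w) v = (0 : DirectSum V M) v := by rw [hXw]
        simpa [DFinsupp.smul_apply, DirectSum.smul_apply] using this
      obtain ⟨p, hp⟩ := Submodule.Quotient.mk_surjective (I v) (w v)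
      rw [← hp] at hX ⊢
      rw [← Submodule.Quotient.mk_smul, Submodule.Quotient.mk_eq_zero] at hX
      rw [smul_eq_mul, Ideal.mem_span_singleton] at hX
      obtain ⟨q, hq⟩ := hX
      rw [pow_succ', mul_assoc] at hq
      have hpq : p = (Polynomial.X : R) ^ (n v) * q :=
        mul_left_cancel₀ Polynomial.X_ne_zero hq
      show LinearMap.toSpanSingleton R V v p = 0
      rw [LinearMap.toSpanSingleton_apply, hpq, mul_comm, mul_smul, hn v, smul_zero]
    have hfw0 : DirectSum.toModule R V V fv w = 0 := by
      conv_lhs => rw [← DirectSum.sum_support_of w]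
      rw [map_sum]
      refine Finset.sum_eq_zero fun i _ => ?_
      rw [← DirectSum.lof_eq_of R, DirectSum.toModule_lof]
      exact hcomp i
    exact hv₀ne (hfw ▸ hfw0 ▸ rfl)
end

section
/- Let (A_n)_{n∈ℕ} be a sequence of rings together with surjective ring homomorphisms π_n : A_{n+1} → A_n. For each n let M_n and N_n be left A_n-modules, and let p_n : M_{n+1} → M_n and q_n : N_{n+1} → N_n be surjective π_n-semilinear maps satisfying ker p_n = (ker π_n)•M_{n+1} and ker q_n = (ker π_n)•N_{n+1}. Let f_n : M_n → N_n be surjective A_n-linear maps such that f_n ∘ p_n = q_n ∘ f_{n+1} for all n. Then for every m₀ ∈ M₀ with f₀(m₀) = 0 there exists a sequence of elements m_n ∈ M_n, extending the given m₀, such that f_n(m_n) = 0 and p_n(m_{n+1}) = m_n for all n ∈ ℕ. -/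
universe u v

/-- For a left ideal `I` of a (possibly noncommutative) ring `R` and a left `R`-module `M`,
`idealSmul I M` is the submodule `I•M` of `M` generated by all products `a • m` with
`a ∈ I` and `m ∈ M`. -/
def idealSmul {R : Type u} [Ring R] (I : Ideal R) (M : Type v) [AddCommGroup M]
    [Module R M] : Submodule R M :=
  Submodule.span R {x : M | ∃ a ∈ I, ∃ m : M, x = a • m}

/-- Given surjective ring maps `π n : A (n+1) → A n`, modules `M n`, `N n` over `A n` with
surjective semilinear transition maps whose kernels are `(ker π n)•M (n+1)` resp.
`(ker π n)•N (n+1)`, and compatible surjective `A n`-linear maps `f n : M n → N n`, every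
element of `ker (f 0)` extends to a compatible sequence of elements of the kernels. -/
theorem statement8
    (A : ℕ → Type u) [∀ n, Ring (A n)]
    (π : ∀ n, A (n + 1) →+* A n) (hπ : ∀ n, Function.Surjective (π n))
    (M N : ℕ → Type v)
    [∀ n, AddCommGroup (M n)] [∀ n, Module (A n) (M n)]
    [∀ n, AddCommGroup (N n)] [∀ n, Module (A n) (N n)]
    (p : ∀ n, M (n + 1) →ₛₗ[π n] M n) (hp : ∀ n, Function.Surjective (p n))
    (hkerp : ∀ n, LinearMap.ker (p n) = idealSmul (RingHom.ker (π n)) (M (n + 1)))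
    (q : ∀ n, N (n + 1) →ₛₗ[π n] N n) (hq : ∀ n, Function.Surjective (q n))
    (hkerq : ∀ n, LinearMap.ker (q n) = idealSmul (RingHom.ker (π n)) (N (n + 1)))
    (f : ∀ n, M n →ₗ[A n] N n) (hf : ∀ n, Function.Surjective (f n))
    (hcomm : ∀ n (x : M (n + 1)), f n (p n x) = q n (f (n + 1) x))
    (m₀ : M 0) (hm₀ : f 0 m₀ = 0) :
    ∃ m : ∀ n, M n, m 0 = m₀ ∧ (∀ n, f n (m n) = 0) ∧ ∀ n, p n (m (n + 1)) = m n := by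
  have key : ∀ n (x : M n), f n x = 0 → ∃ y : M (n + 1), f (n + 1) y = 0 ∧ p n y = x := by
    intro n x hx
    obtain ⟨z, hz⟩ := hp n x
    have hz' : f (n + 1) z ∈ LinearMap.ker (q n) := by
      rw [LinearMap.mem_ker, ← hcomm n z, hz, hx]
    rw [hkerq n] at hz'
    have hle : idealSmul (RingHom.ker (π n)) (N (n + 1)) ≤
        Submodule.map (f (n + 1)) (idealSmul (RingHom.ker (π n)) (M (n + 1))) := by
      rw [idealSmul, Submodule.span_le]
      rintro _ ⟨a, ha, w, rfl⟩
      obtain ⟨v, hv⟩ := hf (n + 1) w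
      exact ⟨a • v, Submodule.subset_span ⟨a, ha, v, rfl⟩, by simp [hv]⟩
    obtain ⟨y, hy, hyz⟩ := hle hz'
    have hyker : y ∈ LinearMap.ker (p n) := by rw [hkerp n]; exact hy
    refine ⟨z - y, ?_, ?_⟩
    · rw [map_sub, hyz, sub_self]
    · rw [map_sub, LinearMap.mem_ker.mp hyker, sub_zero, hz]
  choose g hg1 hg2 using key
  let m : ∀ n, {x : M n // f n x = 0} := fun n =>
    Nat.rec ⟨m₀, hm₀⟩ (fun k x => ⟨g k x.1 x.2, hg1 k x.1 x.2⟩) n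
  exact ⟨fun n => (m n).1, rfl, fun n => (m n).2, fun n => hg2 n (m n).1 (m n).2⟩
end

section
/- Let (A_n)_{n∈ℕ} be a sequence of rings with surjective ring homomorphisms π_n : A_{n+1} → A_n, and for each n let N_n be a left A_n-module with surjective π_n-semilinear maps q_n : N_{n+1} → N_n satisfying ker q_n = (ker π_n)•N_{n+1}. Let N̂ be the set of compatible sequences x = (x_n)_{n∈ℕ} with x_n ∈ N_n and q_n(x_{n+1}) = x_n, and for each n let ε_n : (N̂ →₀ A_n) → N_n be the A_n-linear map sending a finitely supported family (a_x)_{x∈N̂} to Σ_x a_x • x_n. Then: (i) each ε_n is surjective; and (ii) if K̂ denotes the set of sequences k = (k_n)_{n∈ℕ} with k_n ∈ ker ε_n ⊆ (N̂ →₀ A_n) and with k_n obtained from k_{n+1} by applying π_n to each coefficient, then the A_n-linear map δ_n : (K̂ →₀ A_n) → (N̂ →₀ A_n) sending (b_k)_{k∈K̂} to Σ_k b_k • k_n has image exactly ker ε_n. In particular, for every n the sequence (K̂ →₀ A_n) → (N̂ →₀ A_n) → N_n → 0 is exact. -/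
universe u v

section

variable (A : ℕ → Type u) [∀ n, Ring (A n)] (π : ∀ n, A (n + 1) →+* A n)
  (N : ℕ → Type v) [∀ n, AddCommGroup (N n)] [∀ n, Module (A n) (N n)]
  (q : ∀ n, N (n + 1) →ₛₗ[π n] N n)

/-- `N̂`: the set of compatible sequences `(x n)` with `x n ∈ N n` and `q n (x (n+1)) = x n`. -/
def CompatSeq : Type v :=
  { x : ∀ n, N n // ∀ n, q n (x (n + 1)) = x n }

/-- `ε n : (N̂ →₀ A n) → N n`, sending a finitely supported family `(a x)` to `Σ a x • x n`. -/
noncomputable def eps (n : ℕ) : (CompatSeq A π N q →₀ A n) →ₗ[A n] N n :=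
  Finsupp.linearCombination (A n) fun x => x.1 n

/-- `K̂`: the set of compatible sequences of kernel elements `k n ∈ ker (ε n)`, where `k n`
is obtained from `k (n+1)` by applying `π n` to each coefficient. -/
def KerSeq : Type (max u v) :=
  { k : ∀ n, (CompatSeq A π N q →₀ A n) //
      (∀ n, k n ∈ LinearMap.ker (eps A π N q n)) ∧
      ∀ n, Finsupp.mapRange (π n) (map_zero (π n)) (k (n + 1)) = k n }

/-- `δ n : (K̂ →₀ A n) → (N̂ →₀ A n)`, sending `(b k)` to `Σ b k • k n`. -/
noncomputable def delta (n : ℕ) :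
    (KerSeq A π N q →₀ A n) →ₗ[A n] (CompatSeq A π N q →₀ A n) :=
  Finsupp.linearCombination (A n) fun k => k.1 n

-- generic sequence machinery
private noncomputable def liftFun {T : ℕ → Type w} (d : ∀ m, T (m + 1) → T m)
    (hl : ∀ m (t : T m), ∃ s, d m s = t) (w : T 0) : ∀ m, T m
  | 0 => w
  | (m + 1) => (hl m (liftFun d hl w m)).choose

private lemma liftFun_compat {T : ℕ → Type w} (d : ∀ m, T (m + 1) → T m)
    (hl : ∀ m (t : T m), ∃ s, d m s = t) (w : T 0) (m : ℕ) :
    d m (liftFun d hl w (m + 1)) = liftFun d hl w m := by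
  simp only [liftFun]
  exact (hl m _).choose_spec

private noncomputable def extFun {T : ℕ → Type w} (z : ∀ m, T m)
    (d : ∀ m, T (m + 1) → T m) (hl : ∀ m (t : T m), ∃ s, d m s = t)
    (n : ℕ) (ww : T (n + 1)) : ∀ m, T m
  | 0 => z 0
  | (m + 1) =>
    if h : m = n then cast (congrArg (fun i => T (i + 1)) h.symm) ww
    else if m < n then z (m + 1)
    else (hl m (extFun z d hl n ww m)).choose

private lemma extFun_le {T : ℕ → Type w} (z : ∀ m, T m)
    (d : ∀ m, T (m + 1) → T m) (hl : ∀ m (t : T m), ∃ s, d m s = t)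
    (n : ℕ) (ww : T (n + 1)) : ∀ m, m ≤ n → extFun z d hl n ww m = z m := by
  intro m hm
  induction m with
  | zero => rfl
  | succ m ihm =>
    have h1 : ¬ m = n := by omega
    have h2 : m < n := by omega
    simp only [extFun, dif_neg h1, if_pos h2]

private lemma extFun_top {T : ℕ → Type w} (z : ∀ m, T m)
    (d : ∀ m, T (m + 1) → T m) (hl : ∀ m (t : T m), ∃ s, d m s = t)
    (n : ℕ) (ww : T (n + 1)) : extFun z d hl n ww (n + 1) = ww := by
  simp only [extFun, dif_pos rfl, cast_eq]
  simp

private lemma extFun_compat {T : ℕ → Type w} (z : ∀ m, T m)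
    (d : ∀ m, T (m + 1) → T m) (hl : ∀ m (t : T m), ∃ s, d m s = t)
    (n : ℕ) (ww : T (n + 1)) (hdz : ∀ m, d m (z (m + 1)) = z m) (hw : d n ww = z n) :
    ∀ m, d m (extFun z d hl n ww (m + 1)) = extFun z d hl n ww m := by
  intro m
  rcases lt_trichotomy m n with h | h | h
  · rw [extFun_le z d hl n ww (m + 1) (by omega), hdz, extFun_le z d hl n ww m (by omega)]
  · subst h
    rw [extFun_top, hw, extFun_le z d hl m ww m le_rfl]
  · have h1 : ¬ m = n := by omega
    have h2 : ¬ m < n := by omega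
    conv_lhs => rw [extFun]
    rw [dif_neg h1, if_neg h2]
    exact (hl m _).choose_spec

private lemma eps_mapRange (n : ℕ) (v : CompatSeq A π N q →₀ A (n + 1)) :
    eps A π N q n (Finsupp.mapRange (π n) (map_zero (π n)) v) = q n (eps A π N q (n + 1) v) := by
  induction v using Finsupp.induction_linear with
  | zero => simp
  | add f g hf hg =>
    rw [Finsupp.mapRange_add (map_add (π n)), map_add, map_add, map_add, hf, hg]
  | single x a =>
    rw [Finsupp.mapRange_single]
    simp only [eps, Finsupp.linearCombination_single]
    rw [map_smulₛₗ, x.2 n]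

private lemma compat_proj_surj (hq : ∀ n, Function.Surjective (q n)) :
    ∀ (n : ℕ) (x : N n), ∃ c : CompatSeq A π N q, c.1 n = x := by
  intro n
  induction n with
  | zero =>
    intro x
    exact ⟨⟨liftFun (fun m y => q m y) (fun m t => hq m t) x,
      fun m => liftFun_compat (fun m y => q m y) (fun m t => hq m t) x m⟩, rfl⟩
  | succ n ih =>
    intro x
    obtain ⟨c, hc⟩ := ih (q n x)
    have hqw : q n (x - c.1 (n + 1)) = 0 := by
      rw [map_sub, c.2 n, hc, sub_self]
    refine ⟨⟨fun m => c.1 m + extFun (fun m => (0 : N m)) (fun m y => q m y)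
        (fun m t => hq m t) n (x - c.1 (n + 1)) m, fun m => ?_⟩, ?_⟩
    · rw [map_add, c.2 m, extFun_compat (fun m => (0 : N m)) (fun m y => q m y)
        (fun m t => hq m t) n (x - c.1 (n + 1)) (fun m => map_zero (q m)) hqw m]
    · show c.1 (n + 1) + extFun _ _ _ n (x - c.1 (n + 1)) (n + 1) = x
      rw [extFun_top]
      abel

private lemma ker_lift (hπ : ∀ n, Function.Surjective (π n))
    (hq : ∀ n, Function.Surjective (q n))
    (hker : ∀ n, LinearMap.ker (q n) = idealSmul (RingHom.ker (π n)) (N (n + 1)))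
    (n : ℕ) (u : CompatSeq A π N q →₀ A n) (hu : eps A π N q n u = 0) :
    ∃ v : CompatSeq A π N q →₀ A (n + 1),
      eps A π N q (n + 1) v = 0 ∧ Finsupp.mapRange (π n) (map_zero (π n)) v = u := by
  obtain ⟨v0, hv0⟩ := Finsupp.mapRange_surjective (π n) (map_zero (π n)) (hπ n) u
  have hy : eps A π N q (n + 1) v0 ∈ idealSmul (RingHom.ker (π n)) (N (n + 1)) := by
    rw [← hker n, LinearMap.mem_ker, ← eps_mapRange, hv0, hu]
  set T : Submodule (A (n + 1)) (N (n + 1)) :=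
    { carrier := {y | ∃ w : CompatSeq A π N q →₀ A (n + 1),
        eps A π N q (n + 1) w = y ∧ Finsupp.mapRange (π n) (map_zero (π n)) w = 0},
      add_mem' := by
        rintro a b ⟨wa, ha1, ha2⟩ ⟨wb, hb1, hb2⟩
        exact ⟨wa + wb, by rw [map_add, ha1, hb1],
          by rw [Finsupp.mapRange_add (map_add (π n)), ha2, hb2, add_zero]⟩
      zero_mem' := ⟨0, by simp⟩
      smul_mem' := by
        rintro a y ⟨w, h1, h2⟩
        refine ⟨a • w, by rw [map_smul, h1], ?_⟩
        ext s
        have h3 : π n (w s) = 0 := by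
          have := congrArg (fun t => t s) h2
          simpa [Finsupp.mapRange_apply] using this
        simp [Finsupp.mapRange_apply, Finsupp.smul_apply, smul_eq_mul, map_mul, h3] } with hT
  have hST : idealSmul (RingHom.ker (π n)) (N (n + 1)) ≤ T := by
    rw [idealSmul]
    apply Submodule.span_le.2
    rintro y ⟨a, ha, x, rfl⟩
    obtain ⟨c, hc⟩ := compat_proj_surj A π N q hq (n + 1) x
    refine ⟨Finsupp.single c a, ?_, ?_⟩
    · show eps A π N q (n + 1) (Finsupp.single c a) = a • x
      simp only [eps, Finsupp.linearCombination_single, hc]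
    · rw [Finsupp.mapRange_single, show π n a = 0 from ha, Finsupp.single_zero]
  obtain ⟨w, hw1, hw2⟩ := hST hy
  refine ⟨v0 - w, by rw [map_sub, hw1, sub_self], ?_⟩
  rw [Finsupp.mapRange_sub (map_sub (π n)), hv0, hw2, sub_zero]

private def KT (m : ℕ) : Type (max u v) :=
  {v : CompatSeq A π N q →₀ A m // eps A π N q m v = 0}

private noncomputable def Kd (m : ℕ) (v : KT A π N q (m + 1)) : KT A π N q m :=
  ⟨Finsupp.mapRange (π m) (map_zero (π m)) v.1, by rw [eps_mapRange, v.2, map_zero]⟩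

private lemma kerSeq_exists (hπ : ∀ n, Function.Surjective (π n))
    (hq : ∀ n, Function.Surjective (q n))
    (hker : ∀ n, LinearMap.ker (q n) = idealSmul (RingHom.ker (π n)) (N (n + 1))) :
    ∀ (n : ℕ) (u : CompatSeq A π N q →₀ A n), eps A π N q n u = 0 →
      ∃ k : KerSeq A π N q, k.1 n = u := by
  have hl : ∀ m (t : KT A π N q m), ∃ s, Kd A π N q m s = t := by
    intro m t
    obtain ⟨v, h1, h2⟩ := ker_lift A π N q hπ hq hker m t.1 t.2
    exact ⟨⟨v, h1⟩, Subtype.ext h2⟩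
  intro n
  induction n with
  | zero =>
    intro u hu
    refine ⟨⟨fun m => (liftFun (Kd A π N q) hl ⟨u, hu⟩ m).1,
      fun m => LinearMap.mem_ker.2 (liftFun (Kd A π N q) hl ⟨u, hu⟩ m).2,
      fun m => congrArg Subtype.val (liftFun_compat (Kd A π N q) hl ⟨u, hu⟩ m)⟩, rfl⟩
  | succ n ih =>
    intro u hu
    have hDu : eps A π N q n (Finsupp.mapRange (π n) (map_zero (π n)) u) = 0 := by
      rw [eps_mapRange, hu, map_zero]
    obtain ⟨k, hk⟩ := ih _ hDu
    have hw1 : eps A π N q (n + 1) (u - k.1 (n + 1)) = 0 := by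
      rw [map_sub, hu, LinearMap.mem_ker.1 (k.2.1 (n + 1)), sub_self]
    have hzz : ∀ m, Kd A π N q m (⟨0, map_zero _⟩ : KT A π N q (m + 1)) = ⟨0, map_zero _⟩ :=
      fun m => Subtype.ext (show Finsupp.mapRange (π m) (map_zero (π m))
        (0 : CompatSeq A π N q →₀ A (m + 1)) = 0 from Finsupp.mapRange_zero)
    have hw2 : Kd A π N q n (⟨u - k.1 (n + 1), hw1⟩ : KT A π N q (n + 1)) = ⟨0, map_zero _⟩ := by
      apply Subtype.ext
      show Finsupp.mapRange (π n) (map_zero (π n)) (u - k.1 (n + 1)) = 0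
      rw [Finsupp.mapRange_sub (map_sub (π n)), k.2.2 n, hk, sub_self]
    set f := extFun (fun m => (⟨0, map_zero _⟩ : KT A π N q m)) (Kd A π N q) hl n
      ⟨u - k.1 (n + 1), hw1⟩ with hf
    have hfc : ∀ m, Kd A π N q m (f (m + 1)) = f m :=
      extFun_compat _ _ _ _ _ hzz hw2
    have hfn : f (n + 1) = ⟨u - k.1 (n + 1), hw1⟩ := extFun_top _ _ _ _ _
    refine ⟨⟨fun m => k.1 m + (f m).1,
      fun m => LinearMap.mem_ker.2
        (by rw [map_add, LinearMap.mem_ker.1 (k.2.1 m), (f m).2, add_zero]),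
      fun m => by rw [Finsupp.mapRange_add (map_add (π m)), k.2.2 m,
        show Finsupp.mapRange (π m) (map_zero (π m)) (f (m + 1)).1 = (f m).1
          from congrArg Subtype.val (hfc m)]⟩, ?_⟩
    show k.1 (n + 1) + (f (n + 1)).1 = u
    rw [hfn]
    show k.1 (n + 1) + (u - k.1 (n + 1)) = u
    abel

/-- With surjective transition maps whose kernels are `(ker π n)•N (n+1)`: each `ε n` is
surjective and the image of `δ n` is exactly `ker (ε n)`; in particular for every `n` the
sequence `(K̂ →₀ A n) → (N̂ →₀ A n) → N n → 0` is exact. -/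
theorem statement9 (hπ : ∀ n, Function.Surjective (π n))
    (hq : ∀ n, Function.Surjective (q n))
    (hker : ∀ n, LinearMap.ker (q n) = idealSmul (RingHom.ker (π n)) (N (n + 1))) :
    (∀ n, Function.Surjective (eps A π N q n)) ∧
    ∀ n, LinearMap.range (delta A π N q n) = LinearMap.ker (eps A π N q n) := by
  refine ⟨fun n y => ?_, fun n => le_antisymm ?_ ?_⟩
  · obtain ⟨c, hc⟩ := compat_proj_surj A π N q hq n y
    exact ⟨Finsupp.single c 1, by simp only [eps, Finsupp.linearCombination_single, one_smul, hc]⟩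
  · rw [delta, Finsupp.range_linearCombination]
    apply Submodule.span_le.2
    rintro y ⟨k, rfl⟩
    exact k.2.1 n
  · intro u hu
    obtain ⟨k, hk⟩ := kerSeq_exists A π N q hπ hq hker n u (LinearMap.mem_ker.1 hu)
    exact ⟨Finsupp.single k 1,
      by simp only [delta, Finsupp.linearCombination_single, one_smul, hk]⟩

end
end

section
/- Let R be a commutative ring and let F : ModuleCat R → ModuleCat R be an additive, R-linear functor that preserves all small colimits. Then F is naturally isomorphic to the functor M ↦ M ⊗_R F(R), i.e., to tensoring on the right with the R-module F(R) (Eilenberg–Watts). -/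
open CategoryTheory CategoryTheory.Limits

universe u

set_option maxHeartbeats 1000000

section AuxGeneral

variable {C D : Type*} [Category C] [Category D]

lemma aux_isIso_app_of_isColimit {J : Type*} [Category J] (K : J ⥤ C) {c : Cocone K}
    (hc : IsColimit c) {G H : C ⥤ D} [PreservesColimit K G] [PreservesColimit K H]
    (τ : G ⟶ H) (h : ∀ j, IsIso (τ.app (K.obj j))) : IsIso (τ.app c.pt) := by
  have hG := isColimitOfPreserves G hc
  have hH := isColimitOfPreserves H hc
  let w : K ⋙ G ≅ K ⋙ H := NatIso.ofComponents (fun j => asIso (τ.app (K.obj j)))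
    (fun f => τ.naturality _)
  have : τ.app c.pt = (IsColimit.coconePointsIsoOfNatIso hG hH w).hom := by
    apply hG.hom_ext
    intro j
    rw [IsColimit.comp_coconePointsIsoOfNatIso_hom]
    simp [w]
    rfl
  rw [this]
  infer_instance

lemma aux_isIso_app_of_iso {G H : C ⥤ D} (τ : G ⟶ H) {X Y : C} (e : X ≅ Y)
    (h : IsIso (τ.app X)) : IsIso (τ.app Y) := by
  have : τ.app Y = G.map e.inv ≫ τ.app X ≫ H.map e.hom := by
    rw [← τ.naturality e.hom, ← Category.assoc, ← G.map_comp, e.inv_hom_id, G.map_id,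
      Category.id_comp]
  rw [this]
  infer_instance

end AuxGeneral

section EW

open TensorProduct MonoidalCategory

variable {R : Type u} [CommRing R]
variable (F : ModuleCat.{u} R ⥤ ModuleCat.{u} R) [F.Additive] [F.Linear R]

/-- The component `M ⊗ F(R) → F(M)` of the Eilenberg–Watts comparison map. -/
noncomputable def ewApp (M : ModuleCat.{u} R) :
    (tensorRight (F.obj (ModuleCat.of R R))).obj M ⟶ F.obj M :=
  ModuleCat.ofHom <| TensorProduct.lift
    ((ModuleCat.homLinearEquiv (S := R)).toLinearMap.comp
      ((F.mapLinearMap (X := ModuleCat.of R R) (Y := M) R).comp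
      ((ModuleCat.homLinearEquiv (S := R)).symm.toLinearMap.comp
      (LinearMap.ringLmapEquivSelf R R M).symm.toLinearMap)))

lemma ewApp_tmul (M : ModuleCat.{u} R) (m : M) (x : F.obj (ModuleCat.of R R)) :
    (ewApp F M).hom (m ⊗ₜ x) = (F.map (ModuleCat.ofHom (LinearMap.toSpanSingleton R M m))).hom x := rfl

/-- The Eilenberg–Watts comparison natural transformation. -/
noncomputable def ewNat : tensorRight (F.obj (ModuleCat.of R R)) ⟶ F where
  app := ewApp F
  naturality M N f := by
    apply ModuleCat.hom_ext
    apply TensorProduct.ext'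
    intro m x
    show (ewApp F N).hom ((f.hom m) ⊗ₜ x) = (F.map f).hom ((ewApp F M).hom (m ⊗ₜ x))
    rw [ewApp_tmul, ewApp_tmul]
    have h2 : ModuleCat.ofHom (LinearMap.toSpanSingleton R N (f.hom m))
        = ((ModuleCat.ofHom (LinearMap.toSpanSingleton R M m) : ModuleCat.of R R ⟶ M) ≫ f :
            ModuleCat.of R R ⟶ N) := by
      apply ModuleCat.hom_ext; apply LinearMap.ext; intro r
      show r • f.hom m = f.hom (r • m)
      rw [map_smul]
    rw [h2, F.map_comp]
    rfl

lemma ewApp_R_isIso : IsIso (ewApp F (ModuleCat.of R R)) := by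
  refine ⟨ModuleCat.ofHom ((TensorProduct.mk R R (F.obj (ModuleCat.of R R))) 1), ?_, ?_⟩
  · apply ModuleCat.hom_ext
    refine TensorProduct.ext' fun (r : R) x => ?_
    show (1 : R) ⊗ₜ ((ewApp F (ModuleCat.of R R)).hom (r ⊗ₜ x)) = r ⊗ₜ x
    rw [ewApp_tmul]
    have : ModuleCat.ofHom (LinearMap.toSpanSingleton R ↑(ModuleCat.of R R) r)
        = ((r : R) • 𝟙 (ModuleCat.of R R) : ModuleCat.of R R ⟶ ModuleCat.of R R) := by
      apply ModuleCat.hom_ext; apply LinearMap.ext; intro s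
      show s • r = (r : R) • ((𝟙 (ModuleCat.of R R) : ModuleCat.of R R ⟶ ModuleCat.of R R).hom s)
      show s * r = r * s
      rw [mul_comm]
    rw [this, F.map_smul, F.map_id]
    show (1 : R) ⊗ₜ ((r : R) • x) = r ⊗ₜ x
    rw [TensorProduct.tmul_smul, TensorProduct.smul_tmul']
    show ((r : R) • (1 : R)) ⊗ₜ x = r ⊗ₜ x
    rw [smul_eq_mul, mul_one]
  · apply ModuleCat.hom_ext
    apply LinearMap.ext
    intro x
    show (ewApp F (ModuleCat.of R R)).hom ((1:R) ⊗ₜ x) = x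
    rw [ewApp_tmul]
    have : ModuleCat.ofHom (LinearMap.toSpanSingleton R ↑(ModuleCat.of R R) (1:R))
        = (𝟙 (ModuleCat.of R R) : ModuleCat.of R R ⟶ ModuleCat.of R R) := by
      apply ModuleCat.hom_ext; apply LinearMap.ext; intro s
      show s • (1 : R) = s
      rw [smul_eq_mul, mul_one]
    rw [this, F.map_id]
    rfl

end EW

/-- Eilenberg–Watts: a colimit-preserving `R`-linear functor `ModuleCat R ⥤ ModuleCat R` is
naturally isomorphic to tensoring with the `R`-module `F(R)`. -/
theorem statement11 (R : Type u) [CommRing R]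
    (F : ModuleCat.{u} R ⥤ ModuleCat.{u} R) [F.Additive] [F.Linear R]
    [PreservesColimits F] :
    Nonempty (F ≅ MonoidalCategory.tensorRight (F.obj (ModuleCat.of R R))) := by
  classical
  open MonoidalCategory in
  haveI hshrink : PreservesColimitsOfSize.{0, 0} F := preservesColimitsOfSize_shrink F
  -- tensorRight preserves colimits (via the braiding and monoidal closedness)
  haveI htens : PreservesColimits (tensorRight (F.obj (ModuleCat.of R R))) := by
    have e : tensorLeft (F.obj (ModuleCat.of R R)) ≅ tensorRight (F.obj (ModuleCat.of R R)) :=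
      NatIso.ofComponents (fun Y => β_ (F.obj (ModuleCat.of R R)) Y) (by intros; simp)
    exact preservesColimits_of_natIso e
  haveI htens0 : PreservesColimitsOfSize.{0, 0} (tensorRight (F.obj (ModuleCat.of R R))) :=
    preservesColimitsOfSize_shrink _
  set τ := ewNat F with hτ
  -- step 1: iso on R
  have hR : IsIso (τ.app (ModuleCat.of R R)) := ewApp_R_isIso F
  -- step 2: iso on free modules
  have hfree : ∀ (ι : Type u), IsIso (τ.app (ModuleCat.of R (ι →₀ R))) := by
    intro ι
    have hds := aux_isIso_app_of_isColimit
        (Discrete.functor (fun (_ : ι) => ModuleCat.of R R))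
        (ModuleCat.coproductCoconeIsColimit (fun (_ : ι) => ModuleCat.of R R)) τ
        (fun j => hR)
    exact aux_isIso_app_of_iso τ
      ((finsuppLEquivDirectSum R R ι).symm.toModuleIso) hds
  -- step 3: iso on every module via a free presentation
  have hall : ∀ M : ModuleCat.{u} R, IsIso (τ.app M) := by
    intro M
    set π : (↑M →₀ R) →ₗ[R] ↑M := Finsupp.linearCombination R _root_.id with hπ
    have hsurj : Function.Surjective π := Finsupp.linearCombination_id_surjective R ↑M
    set K := LinearMap.ker π with hK
    set f : (↥K →₀ R) →ₗ[R] (↑M →₀ R) :=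
      Finsupp.linearCombination R (fun k : ↥K => (k : ↑M →₀ R)) with hf
    have hrange : LinearMap.range f = K := by
      rw [hf, Finsupp.range_linearCombination]
      simp [Subtype.range_coe, Submodule.span_eq]
    set f' : ModuleCat.of R (↥K →₀ R) ⟶ ModuleCat.of R (↑M →₀ R) := ModuleCat.ofHom f with hf'
    have hcoker : IsIso (τ.app (ModuleCat.cokernelCocone f').pt) := by
      refine aux_isIso_app_of_isColimit (parallelPair f' 0)
        (ModuleCat.cokernelIsColimit f') τ (fun j => ?_)
      cases j
      · exact hfree ↥K
      · exact hfree ↑M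
    have e : ((↑M →₀ R) ⧸ LinearMap.range f) ≃ₗ[R] ↑M :=
      (Submodule.quotEquivOfEq _ _ (hrange.trans hK)).trans
        (π.quotKerEquivOfSurjective hsurj)
    exact aux_isIso_app_of_iso τ (e.toModuleIso : ModuleCat.of R _ ≅ M) hcoker
  haveI : ∀ M : ModuleCat.{u} R, IsIso (τ.app M) := hall
  haveI : IsIso τ := NatIso.isIso_of_isIso_app τ
  exact ⟨(asIso τ).symm⟩
end

section
/- Let K be a field, A a finite-dimensional associative unital K-algebra, and S a finite-dimensional left A-module. Call a surjective A-linear map f : T → S essential if no proper A-submodule T' ⊊ T satisfies f(T') = S. Then there exists d ∈ ℕ such that every finite-dimensional left A-module T admitting an essential surjection onto S satisfies dim_K T ≤ d. -/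
universe u

/-- Over a finite-dimensional algebra `A` over a field `K`, the dimensions of the
finite-dimensional `A`-modules `T` admitting an essential surjection onto a fixed
finite-dimensional `A`-module `S` are uniformly bounded. -/
theorem statement12 (K : Type u) [Field K] (A : Type u) [Ring A] [Algebra K A]
    [FiniteDimensional K A]
    (S : Type u) [AddCommGroup S] [Module K S] [Module A S] [IsScalarTower K A S]
    [FiniteDimensional K S] :
    ∃ d : ℕ, ∀ (T : Type u) [AddCommGroup T] [Module K T] [Module A T] [IsScalarTower K A T]
      [FiniteDimensional K T] (f : T →ₗ[A] S),
      Function.Surjective f →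
      (∀ T' : Submodule A T, T' ≠ ⊤ → Submodule.map f T' ≠ ⊤) →
      Module.finrank K T ≤ d := by
  classical
  set n := Module.finrank K S with hn
  refine ⟨n * Module.finrank K A, ?_⟩
  intro T _ _ _ _ _ f hsurj hess
  -- basis of S
  let b : Module.Basis (Fin n) K S := Module.finBasis K S
  -- lift basis vectors through f
  choose t ht using fun i => hsurj (b i)
  -- the A-span of the lifts maps onto S
  have hmap : Submodule.map f (Submodule.span A (Set.range t)) = ⊤ := by
    rw [Submodule.map_span]
    have : Set.range b ⊆ f '' Set.range t := by
      rintro _ ⟨i, rfl⟩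
      exact ⟨t i, ⟨i, rfl⟩, ht i⟩
    have h1 : Submodule.span A (Set.range b) ≤ Submodule.span A (f '' Set.range t) :=
      Submodule.span_mono this
    have h2 : (⊤ : Submodule A S) ≤ Submodule.span A (Set.range b) := by
      intro x _
      have hx : x ∈ Submodule.span K (Set.range b) := by
        rw [b.span_eq]; trivial
      exact Submodule.span_le_restrictScalars K A (Set.range b) hx
    exact top_le_iff.mp (le_trans (le_trans h2 h1) le_rfl)
  -- essentiality forces the span to be everything
  have hspan : Submodule.span A (Set.range t) = ⊤ := by
    by_contra h
    exact hess _ h hmap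
  -- T is a quotient of A^n
  let g : (Fin n → A) →ₗ[A] T :=
    { toFun := fun c => ∑ i, c i • t i
      map_add' := by
        intro x y
        simp [add_smul, Finset.sum_add_distrib]
      map_smul' := by
        intro a x
        simp [Pi.smul_apply, smul_smul, Finset.smul_sum] }
  have hgsurj : Function.Surjective g := by
    rw [← LinearMap.range_eq_top, eq_top_iff, ← hspan, Submodule.span_le]
    rintro _ ⟨i, rfl⟩
    refine ⟨Pi.single i 1, ?_⟩
    simp [g, Pi.single_apply, Finset.sum_ite_eq']
  have hgK : LinearMap.range (g.restrictScalars K) = ⊤ :=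
    LinearMap.range_eq_top.mpr hgsurj
  have hle : Module.finrank K T ≤ Module.finrank K (Fin n → A) := by
    have := LinearMap.finrank_range_le (g.restrictScalars K)
    rwa [hgK, finrank_top] at this
  calc Module.finrank K T ≤ Module.finrank K (Fin n → A) := hle
    _ = n * Module.finrank K A := by
        simp [Module.finrank_pi_fintype]
end

section
/- Let K be a field, C a K-linear category admitting all small colimits, and Γ a small full subcategory of C such that every object of Γ is tiny and Γ spans C. Let D be any K-linear category admitting all small colimits. Then restriction along the inclusion Γ ↪ C defines an equivalence between the category of colimit-preserving K-linear functors C → D (with all natural transformations as morphisms) and the category of K-linear functors Γ → D (with all natural transformations as morphisms). -/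
open CategoryTheory CategoryTheory.Limits Opposite

universe v u u'

/-- A functor between `K`-linear categories is *`K`-linear* if it is additive and its action
on hom-modules is `K`-linear. -/
def IsLinearFunctor (K : Type v) [Field K] {C : Type*} {D : Type*} [Category C] [Category D]
    [Preadditive C] [Preadditive D] [CategoryTheory.Linear K C] [CategoryTheory.Linear K D]
    (F : C ⥤ D) : Prop :=
  F.Additive ∧ ∀ ⦃X Y : C⦄ (r : K) (f : X ⟶ Y), F.map (r • f) = r • F.map f

variable (K : Type v) [Field K] (C : Type u) [Category.{v} C] [Preadditive C]
  [CategoryTheory.Linear K C] [HasColimits C]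
  (D : Type u') [Category.{v} D] [Preadditive D] [CategoryTheory.Linear K D] [HasColimits D]
  (P : C → Prop)

/-- Restriction along the inclusion of the full subcategory on `P`, viewed as a functor from
the category of colimit-preserving `K`-linear functors `C ⥤ D` to the category of `K`-linear
functors `Γ ⥤ D`. -/
noncomputable def restrictionFunctor :
    ObjectProperty.FullSubcategory (fun F : C ⥤ D => IsLinearFunctor K F ∧ PreservesColimits F) ⥤
      ObjectProperty.FullSubcategory
        (fun G : ObjectProperty.FullSubcategory P ⥤ D => IsLinearFunctor K G) :=
  ObjectProperty.lift _
    (ObjectProperty.ι _ ⋙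
      (Functor.whiskeringLeft (ObjectProperty.FullSubcategory P) C D).obj (ObjectProperty.ι P))
    (by
      rintro ⟨F, ⟨hadd, hsmul⟩, _⟩
      constructor
      · haveI := hadd
        dsimp
        infer_instance
      · intro X Y r f
        exact hsmul r f.hom)

namespace Stmt13

variable {K C D P}

/-- The action on morphisms of a linear functor, as a linear map. -/
def mapLin {C₁ : Type*} {D₁ : Type*} [Category C₁] [Category D₁] [Preadditive C₁]
    [Preadditive D₁] [CategoryTheory.Linear K C₁] [CategoryTheory.Linear K D₁] {F : C₁ ⥤ D₁}
    (hF : IsLinearFunctor K F) (A B : C₁) : (A ⟶ B) →ₗ[K] (F.obj A ⟶ F.obj B) where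
  toFun := F.map
  map_add' f g := by haveI := hF.1; exact F.map_add
  map_smul' r f := hF.2 r f

@[simp] lemma mapLin_apply {C₁ : Type*} {D₁ : Type*} [Category C₁] [Category D₁] [Preadditive C₁]
    [Preadditive D₁] [CategoryTheory.Linear K C₁] [CategoryTheory.Linear K D₁] {F : C₁ ⥤ D₁}
    (hF : IsLinearFunctor K F) {A B : C₁} (f : A ⟶ B) : mapLin hF A B f = F.map f := rfl

/-- Two linear maps out of `Hom(X, colim)` with `X` tiny agree if they agree on
all `u ≫ c.ι.app j`. -/
lemma tiny_ext {X : C} (hX : IsTiny K X) {J : Type v} [Category.{v} J] {H : J ⥤ C}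
    {c : Cocone H} (hc : IsColimit c) {N : Type v} [AddCommGroup N] [Module K N]
    (f g : (X ⟶ c.pt) →ₗ[K] N)
    (h : ∀ (j : J) (u : X ⟶ H.obj j), f (u ≫ c.ι.app j) = g (u ≫ c.ι.app j)) : f = g := by
  haveI : PreservesColimits ((linearCoyoneda K C).obj (op X)) := Classical.choice hX
  have hc' := isColimitOfPreserves ((linearCoyoneda K C).obj (op X)) hc
  let f' : (((linearCoyoneda K C).obj (op X)).mapCocone c).pt ⟶ ModuleCat.of K N :=
    ModuleCat.ofHom f
  let g' : (((linearCoyoneda K C).obj (op X)).mapCocone c).pt ⟶ ModuleCat.of K N :=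
    ModuleCat.ofHom g
  have hfg : f' = g' := by
    apply hc'.hom_ext
    intro j
    ext (u : X ⟶ H.obj j)
    exact h j u
  exact congrArg ModuleCat.Hom.hom hfg

/-- A chosen presentation of an object as a colimit of a small diagram of objects
satisfying `P`. -/
structure Pres (P : C → Prop) (Y : C) where
  J : Type v
  [cat : SmallCategory J]
  F : J ⥤ C
  hF : ∀ j, P (F.obj j)
  nat : F ⟶ (Functor.const J).obj Y
  isColimit : IsColimit (Cocone.mk Y nat)

attribute [instance] Pres.cat

/-- Choice of a presentation for each object. -/
noncomputable def pres (hspan : Spans P) (Y : C) : Pres P Y :=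
  letI : SmallCategory (hspan Y).choose := (hspan Y).choose_spec.choose
  { J := (hspan Y).choose
    F := (hspan Y).choose_spec.choose_spec.choose
    hF := (hspan Y).choose_spec.choose_spec.choose_spec.1
    nat := (hspan Y).choose_spec.choose_spec.choose_spec.2.choose
    isColimit :=
      Classical.choice (hspan Y).choose_spec.choose_spec.choose_spec.2.choose_spec }

/-- Regard a morphism between `P`-objects of `C` as a morphism of the full subcategory. -/
@[reducible] def toΓ {X X' : ObjectProperty.FullSubcategory P} (g : X.obj ⟶ X'.obj) : X ⟶ X' :=
  ⟨g⟩

/-- The chosen presentation diagram, lifted to the full subcategory. -/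
@[reducible] noncomputable def presΓ (hspan : Spans P) (Y : C) :
    (pres hspan Y).J ⥤ ObjectProperty.FullSubcategory P where
  obj j := ⟨(pres hspan Y).F.obj j, (pres hspan Y).hF j⟩
  map f := ObjectProperty.homMk ((pres hspan Y).F.map f)
  map_id j := ObjectProperty.hom_ext (h := (pres hspan Y).F.map_id j)
  map_comp f g := ObjectProperty.hom_ext (h := (pres hspan Y).F.map_comp f g)

/-- `toΓ` as a linear map. -/
def toΓLin (X X' : ObjectProperty.FullSubcategory P) : (X.obj ⟶ X'.obj) →ₗ[K] (X ⟶ X') where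
  toFun := toΓ
  map_add' _ _ := rfl
  map_smul' _ _ := rfl

end Stmt13

namespace Stmt13

set_option linter.unusedSectionVars false

variable {K C D P}
variable {G : ObjectProperty.FullSubcategory P ⥤ D}

/-- Object part of the extension: the colimit of `G` over the chosen presentation. -/
noncomputable abbrev fobj (hspan : Spans P) (G : ObjectProperty.FullSubcategory P ⥤ D) (Y : C) : D :=
  colimit (presΓ hspan Y ⋙ G)

/-- The cocone used to define `phi`. -/
noncomputable def phiCocone (hspan : Spans P) (hG : IsLinearFunctor K G)
    (X : ObjectProperty.FullSubcategory P) (Y : C) :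
    Cocone ((pres hspan Y).F ⋙ (linearCoyoneda K C).obj (op X.obj)) where
  pt := ModuleCat.of K (G.obj X ⟶ fobj hspan G Y)
  ι :=
    { app := fun j => ModuleCat.ofHom
        ((Linear.rightComp K _ (colimit.ι (presΓ hspan Y ⋙ G) j)).comp
          ((mapLin hG X ((presΓ hspan Y).obj j)).comp
            (toΓLin (K := K) X ((presΓ hspan Y).obj j))))
      naturality := fun j j' φ => by
        ext (g : X.obj ⟶ (pres hspan Y).F.obj j)
        show G.map (toΓ (g ≫ (pres hspan Y).F.map φ)) ≫ colimit.ι (presΓ hspan Y ⋙ G) j' =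
          ((Functor.const (pres hspan Y).J).obj
              (ModuleCat.of K (G.obj X ⟶ fobj hspan G Y))).map φ
            (G.map (toΓ g) ≫ colimit.ι (presΓ hspan Y ⋙ G) j)
        have e : toΓ (g ≫ (pres hspan Y).F.map φ) = toΓ g ≫ (presΓ hspan Y).map φ := rfl
        rw [e, G.map_comp, Category.assoc, ← Functor.comp_map (presΓ hspan Y) G,
          colimit.w (presΓ hspan Y ⋙ G) φ, Functor.const_obj_map]
        rfl }

/-- The fundamental linear map `Hom_C(X, Y) →ₗ Hom_D(G X, F Y)`. -/
noncomputable def phi (htiny : ∀ X : C, P X → IsTiny K X) (hspan : Spans P)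
    (hG : IsLinearFunctor K G) (X : ObjectProperty.FullSubcategory P) (Y : C) :
    (X.obj ⟶ Y) →ₗ[K] (G.obj X ⟶ fobj hspan G Y) := by
  haveI : PreservesColimits ((linearCoyoneda K C).obj (op X.obj)) :=
    Classical.choice (htiny _ X.2)
  exact ((isColimitOfPreserves ((linearCoyoneda K C).obj (op X.obj))
    (pres hspan Y).isColimit).desc (phiCocone hspan hG X Y)).hom

lemma phi_fac (htiny : ∀ X : C, P X → IsTiny K X) (hspan : Spans P)
    (hG : IsLinearFunctor K G) (X : ObjectProperty.FullSubcategory P) (Y : C)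
    (j : (pres hspan Y).J) (g : X.obj ⟶ (pres hspan Y).F.obj j) :
    phi htiny hspan hG X Y (g ≫ (pres hspan Y).nat.app j) =
      G.map (toΓ g) ≫ colimit.ι (presΓ hspan Y ⋙ G) j := by
  haveI : PreservesColimits ((linearCoyoneda K C).obj (op X.obj)) :=
    Classical.choice (htiny _ X.2)
  have h := (isColimitOfPreserves ((linearCoyoneda K C).obj (op X.obj))
    (pres hspan Y).isColimit).fac (phiCocone hspan hG X Y) j
  exact congrArg (fun t => ModuleCat.Hom.hom t g) h

lemma phi_nat (htiny : ∀ X : C, P X → IsTiny K X) (hspan : Spans P)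
    (hG : IsLinearFunctor K G) (Y : C) (j : (pres hspan Y).J) :
    phi htiny hspan hG ((presΓ hspan Y).obj j) Y ((pres hspan Y).nat.app j) =
      colimit.ι (presΓ hspan Y ⋙ G) j := by
  have h := phi_fac htiny hspan hG ((presΓ hspan Y).obj j) Y j (𝟙 _)
  rw [Category.id_comp] at h
  rw [h]
  have e : toΓ (𝟙 ((presΓ hspan Y).obj j).obj) = 𝟙 ((presΓ hspan Y).obj j) := rfl
  rw [e, G.map_id, Category.id_comp]

lemma phi_precomp (htiny : ∀ X : C, P X → IsTiny K X) (hspan : Spans P)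
    (hG : IsLinearFunctor K G) {X X' : ObjectProperty.FullSubcategory P} (u : X ⟶ X') (Y : C)
    (h : X'.obj ⟶ Y) :
    phi htiny hspan hG X Y (u.hom ≫ h) =
      G.map u ≫ phi htiny hspan hG X' Y h := by
  have key := tiny_ext (htiny _ X'.2) (pres hspan Y).isColimit
    ((phi htiny hspan hG X Y).comp (Linear.leftComp K Y u.hom))
    ((Linear.leftComp K _ (G.map u)).comp (phi htiny hspan hG X' Y))
    (fun j w => by
      show phi htiny hspan hG X Y (u.hom ≫ w ≫ (pres hspan Y).nat.app j) =
        G.map u ≫ phi htiny hspan hG X' Y (w ≫ (pres hspan Y).nat.app j)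
      rw [← Category.assoc, phi_fac, phi_fac]
      have e2 : toΓ (X' := (presΓ hspan Y).obj j) (u.hom ≫ w) =
          u ≫ toΓ (X' := (presΓ hspan Y).obj j) w := rfl
      rw [e2, G.map_comp, Category.assoc])
  exact DFunLike.congr_fun key h

end Stmt13

namespace Stmt13

set_option linter.unusedSectionVars false

variable {K C D P}
variable {G : ObjectProperty.FullSubcategory P ⥤ D}

/-- The cocone defining the action of the extension on a morphism `f : Y ⟶ Y'`. -/
noncomputable def fmapCocone (htiny : ∀ X : C, P X → IsTiny K X) (hspan : Spans P)
    (hG : IsLinearFunctor K G) {Y Y' : C} (f : Y ⟶ Y') :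
    Cocone (presΓ hspan Y ⋙ G) where
  pt := fobj hspan G Y'
  ι :=
    { app := fun j => phi htiny hspan hG ((presΓ hspan Y).obj j) Y'
        ((pres hspan Y).nat.app j ≫ f)
      naturality := fun j j' φ => by
        have hnat : (pres hspan Y).F.map φ ≫ (pres hspan Y).nat.app j' =
            (pres hspan Y).nat.app j := by
          have := (pres hspan Y).nat.naturality φ
          simpa using this
        show G.map ((presΓ hspan Y).map φ) ≫
            phi htiny hspan hG ((presΓ hspan Y).obj j') Y' ((pres hspan Y).nat.app j' ≫ f) =
          _ ≫ 𝟙 _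
        rw [Category.comp_id, ← phi_precomp htiny hspan hG ((presΓ hspan Y).map φ) Y']
        refine congrArg _ ?_
        show (pres hspan Y).F.map φ ≫ (pres hspan Y).nat.app j' ≫ f =
          (pres hspan Y).nat.app j ≫ f
        rw [← Category.assoc, hnat] }

/-- Action of the extension on morphisms. -/
noncomputable def ffmap (htiny : ∀ X : C, P X → IsTiny K X) (hspan : Spans P)
    (hG : IsLinearFunctor K G) {Y Y' : C} (f : Y ⟶ Y') :
    fobj hspan G Y ⟶ fobj hspan G Y' :=
  colimit.desc (presΓ hspan Y ⋙ G) (fmapCocone htiny hspan hG f)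

lemma ffmap_fac (htiny : ∀ X : C, P X → IsTiny K X) (hspan : Spans P)
    (hG : IsLinearFunctor K G) {Y Y' : C} (f : Y ⟶ Y') (j : (pres hspan Y).J) :
    colimit.ι (presΓ hspan Y ⋙ G) j ≫ ffmap htiny hspan hG f =
      phi htiny hspan hG ((presΓ hspan Y).obj j) Y' ((pres hspan Y).nat.app j ≫ f) :=
  colimit.ι_desc (fmapCocone htiny hspan hG f) j

lemma phi_postcomp (htiny : ∀ X : C, P X → IsTiny K X) (hspan : Spans P)
    (hG : IsLinearFunctor K G) (X : ObjectProperty.FullSubcategory P) {Y Y' : C} (f : Y ⟶ Y')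
    (g : X.obj ⟶ Y) :
    phi htiny hspan hG X Y g ≫ ffmap htiny hspan hG f =
      phi htiny hspan hG X Y' (g ≫ f) := by
  have key := tiny_ext (htiny _ X.2) (pres hspan Y).isColimit
    ((Linear.rightComp K _ (ffmap htiny hspan hG f)).comp (phi htiny hspan hG X Y))
    ((phi htiny hspan hG X Y').comp (Linear.rightComp K _ f))
    (fun j w => by
      show phi htiny hspan hG X Y (w ≫ (pres hspan Y).nat.app j) ≫ ffmap htiny hspan hG f =
        phi htiny hspan hG X Y' ((w ≫ (pres hspan Y).nat.app j) ≫ f)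
      rw [phi_fac, Category.assoc, ffmap_fac,
        ← phi_precomp htiny hspan hG (toΓ (X' := (presΓ hspan Y).obj j) w) Y',
        Category.assoc])
  exact DFunLike.congr_fun key g

/-- The extension of `G` to a functor `C ⥤ D`. -/
noncomputable def FF (htiny : ∀ X : C, P X → IsTiny K X) (hspan : Spans P)
    (hG : IsLinearFunctor K G) : C ⥤ D where
  obj := fobj hspan G
  map := ffmap htiny hspan hG
  map_id Y := colimit.hom_ext (fun j => by
    show colimit.ι _ j ≫ ffmap htiny hspan hG (𝟙 Y) =
      colimit.ι (presΓ hspan Y ⋙ G) j ≫ 𝟙 (fobj hspan G Y)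
    rw [ffmap_fac, Category.comp_id]
    have e : (pres hspan Y).nat.app j ≫ 𝟙 Y = (pres hspan Y).nat.app j := Category.comp_id _
    rw [e, phi_nat])
  map_comp {Y Y' Y''} f f' := colimit.hom_ext (fun j => by
    show colimit.ι _ j ≫ ffmap htiny hspan hG (f ≫ f') = colimit.ι (presΓ hspan Y ⋙ G) j ≫
      ffmap htiny hspan hG f ≫ ffmap htiny hspan hG f'
    rw [ffmap_fac, ← Category.assoc ((pres hspan Y).nat.app j) f f',
      ← phi_postcomp htiny hspan hG ((presΓ hspan Y).obj j) f'
        ((pres hspan Y).nat.app j ≫ f),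
      ← ffmap_fac htiny hspan hG f j, Category.assoc])

lemma FF_linear (htiny : ∀ X : C, P X → IsTiny K X) (hspan : Spans P)
    (hG : IsLinearFunctor K G) : IsLinearFunctor K (FF htiny hspan hG) := by
  constructor
  · exact
      { map_add := fun {Y Y' f g} => colimit.hom_ext (fun j => by
          show colimit.ι _ j ≫ ffmap htiny hspan hG (f + g) =
            colimit.ι (presΓ hspan Y ⋙ G) j ≫
              (ffmap htiny hspan hG f + ffmap htiny hspan hG g)
          rw [Preadditive.comp_add, ffmap_fac, ffmap_fac, ffmap_fac, Preadditive.comp_add,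
            ← map_add (phi htiny hspan hG ((presΓ hspan Y).obj j) Y')]) }
  · intro Y Y' r f
    apply colimit.hom_ext
    intro j
    show colimit.ι _ j ≫ ffmap htiny hspan hG (r • f) =
      colimit.ι (presΓ hspan Y ⋙ G) j ≫ (r • ffmap htiny hspan hG f)
    rw [Linear.comp_smul, ffmap_fac, ffmap_fac, Linear.comp_smul,
      ← map_smul (phi htiny hspan hG ((presΓ hspan Y).obj j) Y') r]

end Stmt13

namespace Stmt13

set_option linter.unusedSectionVars false

variable {K C D P}
variable {G : ObjectProperty.FullSubcategory P ⥤ D}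

section Preserves

variable (htiny : ∀ X : C, P X → IsTiny K X) (hspan : Spans P)
  (hG : IsLinearFunctor K G)
  {J : Type v} [Category.{v} J] {H : J ⥤ C} {c : Cocone H}

/-- The cocone used to define `psi`. -/
noncomputable def psiCocone (hc : IsColimit c) (s : Cocone (H ⋙ FF htiny hspan hG))
    (X : ObjectProperty.FullSubcategory P) : Cocone (H ⋙ (linearCoyoneda K C).obj (op X.obj)) where
  pt := ModuleCat.of K (G.obj X ⟶ s.pt)
  ι :=
    { app := fun k => ModuleCat.ofHom
        ((Linear.rightComp K _ (s.ι.app k)).comp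
          (phi htiny hspan hG X (H.obj k)))
      naturality := fun k k' φ => by
        ext (g : X.obj ⟶ H.obj k)
        show phi htiny hspan hG X (H.obj k') (g ≫ H.map φ) ≫ s.ι.app k' =
          ((Functor.const J).obj (ModuleCat.of K (G.obj X ⟶ s.pt))).map φ
            (phi htiny hspan hG X (H.obj k) g ≫ s.ι.app k)
        have e : ffmap htiny hspan hG (H.map φ) ≫ s.ι.app k' = s.ι.app k := s.w φ
        rw [← phi_postcomp htiny hspan hG X (H.map φ) g]
        erw [Category.assoc, e]
        rw [Functor.const_obj_map]
        rfl }

/-- The comparison map with an arbitrary cocone on the image of a colimit cocone. -/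
noncomputable def psi (hc : IsColimit c) (s : Cocone (H ⋙ FF htiny hspan hG))
    (X : ObjectProperty.FullSubcategory P) : (X.obj ⟶ c.pt) →ₗ[K] (G.obj X ⟶ s.pt) := by
  haveI : PreservesColimits ((linearCoyoneda K C).obj (op X.obj)) :=
    Classical.choice (htiny _ X.2)
  exact ((isColimitOfPreserves ((linearCoyoneda K C).obj (op X.obj)) hc).desc
    (psiCocone htiny hspan hG hc s X)).hom

lemma psi_fac (hc : IsColimit c) (s : Cocone (H ⋙ FF htiny hspan hG))
    (X : ObjectProperty.FullSubcategory P) (k : J) (g : X.obj ⟶ H.obj k) :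
    psi htiny hspan hG hc s X (g ≫ c.ι.app k) =
      phi htiny hspan hG X (H.obj k) g ≫ s.ι.app k := by
  haveI : PreservesColimits ((linearCoyoneda K C).obj (op X.obj)) :=
    Classical.choice (htiny _ X.2)
  have h := (isColimitOfPreserves ((linearCoyoneda K C).obj (op X.obj)) hc).fac
    (psiCocone htiny hspan hG hc s X) k
  exact congrArg (fun t => ModuleCat.Hom.hom t g) h

lemma psi_precomp (hc : IsColimit c) (s : Cocone (H ⋙ FF htiny hspan hG))
    {X X' : ObjectProperty.FullSubcategory P} (u : X ⟶ X') (h : X'.obj ⟶ c.pt) :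
    psi htiny hspan hG hc s X (u.hom ≫ h) =
      G.map u ≫ psi htiny hspan hG hc s X' h := by
  have key := tiny_ext (htiny _ X'.2) hc
    ((psi htiny hspan hG hc s X).comp (Linear.leftComp K c.pt u.hom))
    ((Linear.leftComp K _ (G.map u)).comp (psi htiny hspan hG hc s X'))
    (fun k w => by
      show psi htiny hspan hG hc s X (u.hom ≫ w ≫ c.ι.app k) =
        G.map u ≫ psi htiny hspan hG hc s X' (w ≫ c.ι.app k)
      rw [← Category.assoc, psi_fac, psi_fac,
        phi_precomp htiny hspan hG u (H.obj k) w]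
      erw [Category.assoc])
  exact DFunLike.congr_fun key h

/-- The cocone used to define the descent morphism out of `FF c.pt`. -/
noncomputable def descCocone (hc : IsColimit c) (s : Cocone (H ⋙ FF htiny hspan hG)) :
    Cocone (presΓ hspan c.pt ⋙ G) where
  pt := s.pt
  ι :=
    { app := fun j => psi htiny hspan hG hc s ((presΓ hspan c.pt).obj j)
        ((pres hspan c.pt).nat.app j)
      naturality := fun j j' φ => by
        have hnat : (pres hspan c.pt).F.map φ ≫ (pres hspan c.pt).nat.app j' =
            (pres hspan c.pt).nat.app j := by
          have := (pres hspan c.pt).nat.naturality φ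
          simpa using this
        show G.map ((presΓ hspan c.pt).map φ) ≫
            psi htiny hspan hG hc s ((presΓ hspan c.pt).obj j')
              ((pres hspan c.pt).nat.app j') = _ ≫ 𝟙 _
        rw [Category.comp_id,
          ← psi_precomp htiny hspan hG hc s ((presΓ hspan c.pt).map φ)]
        refine congrArg _ ?_
        show (pres hspan c.pt).F.map φ ≫ (pres hspan c.pt).nat.app j' =
          (pres hspan c.pt).nat.app j
        exact hnat }

/-- The descent morphism. -/
noncomputable def descFF (hc : IsColimit c) (s : Cocone (H ⋙ FF htiny hspan hG)) :
    fobj hspan G c.pt ⟶ s.pt :=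
  colimit.desc (presΓ hspan c.pt ⋙ G) (descCocone htiny hspan hG hc s)

lemma descFF_fac (hc : IsColimit c) (s : Cocone (H ⋙ FF htiny hspan hG))
    (j : (pres hspan c.pt).J) :
    colimit.ι (presΓ hspan c.pt ⋙ G) j ≫ descFF htiny hspan hG hc s =
      psi htiny hspan hG hc s ((presΓ hspan c.pt).obj j) ((pres hspan c.pt).nat.app j) :=
  colimit.ι_desc (descCocone htiny hspan hG hc s) j

lemma phi_descFF (hc : IsColimit c) (s : Cocone (H ⋙ FF htiny hspan hG))
    (X : ObjectProperty.FullSubcategory P) (g : X.obj ⟶ c.pt) :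
    phi htiny hspan hG X c.pt g ≫ descFF htiny hspan hG hc s =
      psi htiny hspan hG hc s X g := by
  have key := tiny_ext (htiny _ X.2) (pres hspan c.pt).isColimit
    ((Linear.rightComp K _ (descFF htiny hspan hG hc s)).comp (phi htiny hspan hG X c.pt))
    (psi htiny hspan hG hc s X)
    (fun j w => by
      show phi htiny hspan hG X c.pt (w ≫ (pres hspan c.pt).nat.app j) ≫
          descFF htiny hspan hG hc s =
        psi htiny hspan hG hc s X (w ≫ (pres hspan c.pt).nat.app j)
      rw [phi_fac, Category.assoc, descFF_fac htiny hspan hG hc s j,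
        ← psi_precomp htiny hspan hG hc s (toΓ (X' := (presΓ hspan c.pt).obj j) w)])
  exact DFunLike.congr_fun key g

/-- `FF` maps colimit cocones to colimit cocones. -/
noncomputable def isColimitFF (hc : IsColimit c) :
    IsColimit ((FF htiny hspan hG).mapCocone c) where
  desc s := descFF htiny hspan hG hc s
  fac s k := by
    apply colimit.hom_ext
    intro j
    show colimit.ι (presΓ hspan (H.obj k) ⋙ G) j ≫
        ffmap htiny hspan hG (c.ι.app k : H.obj k ⟶ c.pt) ≫ descFF htiny hspan hG hc s =
      colimit.ι (presΓ hspan (H.obj k) ⋙ G) j ≫ s.ι.app k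
    rw [← Category.assoc, ffmap_fac]
    erw [phi_descFF, psi_fac, phi_nat]
  uniq s m hm := by
    have key : ∀ (X : ObjectProperty.FullSubcategory P) (g : X.obj ⟶ c.pt),
        phi htiny hspan hG X c.pt g ≫ m = psi htiny hspan hG hc s X g := by
      intro X g
      have key' := tiny_ext (htiny _ X.2) hc
        ((Linear.rightComp K _ m).comp (phi htiny hspan hG X c.pt))
        (psi htiny hspan hG hc s X)
        (fun k w => by
          show phi htiny hspan hG X c.pt (w ≫ c.ι.app k) ≫ m =
            psi htiny hspan hG hc s X (w ≫ c.ι.app k)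
          have e : ffmap htiny hspan hG (c.ι.app k) ≫ m = s.ι.app k := hm k
          erw [← phi_postcomp htiny hspan hG X (c.ι.app k) w]
          erw [Category.assoc]
          erw [e]
          rw [psi_fac])
      exact DFunLike.congr_fun key' g
    show m = descFF htiny hspan hG hc s
    refine colimit.hom_ext (F := presΓ hspan c.pt ⋙ G) fun j => ?_
    have h1 : colimit.ι (presΓ hspan c.pt ⋙ G) j ≫ m =
        psi htiny hspan hG hc s ((presΓ hspan c.pt).obj j) ((pres hspan c.pt).nat.app j) := by
      rw [← phi_nat htiny hspan hG c.pt j]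
      exact key _ _
    have h2 : colimit.ι (presΓ hspan c.pt ⋙ G) j ≫ descFF htiny hspan hG hc s =
        psi htiny hspan hG hc s ((presΓ hspan c.pt).obj j) ((pres hspan c.pt).nat.app j) :=
      descFF_fac htiny hspan hG hc s j
    rw [h1, h2]

end Preserves

lemma FF_preservesColimits (htiny : ∀ X : C, P X → IsTiny K X) (hspan : Spans P)
    (hG : IsLinearFunctor K G) : PreservesColimits (FF htiny hspan hG) :=
  ⟨fun {J} _ => ⟨fun {H} => ⟨fun {c} hc => ⟨isColimitFF htiny hspan hG hc⟩⟩⟩⟩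

end Stmt13

namespace Stmt13

set_option linter.unusedSectionVars false

variable {K C D P}
variable {G : ObjectProperty.FullSubcategory P ⥤ D}
variable (htiny : ∀ X : C, P X → IsTiny K X) (hspan : Spans P) (hG : IsLinearFunctor K G)

/-- The comparison morphism `FF (X.obj) ⟶ G X` for `X` in the subcategory. -/
noncomputable def psiX (X : ObjectProperty.FullSubcategory P) : fobj hspan G X.obj ⟶ G.obj X :=
  colimit.desc (presΓ hspan X.obj ⋙ G)
    { pt := G.obj X
      ι :=
        { app := fun j => G.map (toΓ (X' := X) ((pres hspan X.obj).nat.app j))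
          naturality := fun j j' φ => by
            have hnat : (pres hspan X.obj).F.map φ ≫ (pres hspan X.obj).nat.app j' =
                (pres hspan X.obj).nat.app j := by
              have := (pres hspan X.obj).nat.naturality φ
              simpa using this
            show G.map ((presΓ hspan X.obj).map φ) ≫
                G.map (toΓ (X' := X) ((pres hspan X.obj).nat.app j')) = _ ≫ 𝟙 _
            rw [Category.comp_id, ← G.map_comp]
            refine congrArg _ ?_
            apply ObjectProperty.hom_ext
            show (pres hspan X.obj).F.map φ ≫ (pres hspan X.obj).nat.app j' =
              (pres hspan X.obj).nat.app j
            exact hnat } }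

lemma psiX_fac (X : ObjectProperty.FullSubcategory P) (j : (pres hspan X.obj).J) :
    colimit.ι (presΓ hspan X.obj ⋙ G) j ≫ psiX hspan X =
      G.map (toΓ (X' := X) ((pres hspan X.obj).nat.app j)) :=
  colimit.ι_desc _ j

lemma phi_psiX (X' X : ObjectProperty.FullSubcategory P) (g : X'.obj ⟶ X.obj) :
    phi htiny hspan hG X' X.obj g ≫ psiX hspan X = G.map (toΓ (X' := X) g) := by
  have key := tiny_ext (htiny _ X'.2) (pres hspan X.obj).isColimit
    ((Linear.rightComp K _ (psiX hspan X)).comp (phi htiny hspan hG X' X.obj))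
    ((mapLin hG X' X).comp (toΓLin (K := K) X' X))
    (fun j w => by
      show phi htiny hspan hG X' X.obj (w ≫ (pres hspan X.obj).nat.app j) ≫
          psiX hspan X = G.map (toΓ (X' := X) (w ≫ (pres hspan X.obj).nat.app j))
      rw [phi_fac, Category.assoc, psiX_fac, ← G.map_comp]
      rfl)
  exact DFunLike.congr_fun key g

/-- The canonical isomorphism `FF ∘ inc ≅ G`. -/
noncomputable def etaIso :
    ObjectProperty.ι P ⋙ FF htiny hspan hG ≅ G := by
  refine NatIso.ofComponents (fun X =>
    { hom := psiX hspan X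
      inv := phi htiny hspan hG X X.obj (𝟙 X.obj)
      hom_inv_id := ?_
      inv_hom_id := ?_ }) ?_
  · apply colimit.hom_ext
    intro j
    show colimit.ι (presΓ hspan X.obj ⋙ G) j ≫
        psiX hspan X ≫ phi htiny hspan hG X X.obj (𝟙 X.obj) =
      colimit.ι (presΓ hspan X.obj ⋙ G) j ≫ 𝟙 (fobj hspan G X.obj)
    rw [Category.comp_id, ← Category.assoc, psiX_fac]
    erw [← phi_precomp htiny hspan hG
      (toΓ (X := (presΓ hspan X.obj).obj j) (X' := X) ((pres hspan X.obj).nat.app j)) X.obj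
      (𝟙 X.obj)]
    rw [Category.comp_id]
    erw [phi_nat]
  · have h := phi_psiX htiny hspan hG X X (𝟙 X.obj)
    have e : toΓ (X' := X) (𝟙 X.obj) = 𝟙 X := rfl
    rw [e, G.map_id] at h
    exact h
  · intro X X' u
    apply colimit.hom_ext
    intro j
    show colimit.ι (presΓ hspan X.obj ⋙ G) j ≫
        ffmap htiny hspan hG u.hom ≫ psiX hspan X' =
      colimit.ι (presΓ hspan X.obj ⋙ G) j ≫ psiX hspan X ≫ G.map u
    rw [← Category.assoc, ffmap_fac]
    erw [phi_psiX]
    rw [← Category.assoc, psiX_fac, ← G.map_comp]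
    rfl

end Stmt13

namespace Stmt13

set_option linter.unusedSectionVars false

variable {K C D P}

section FullFaithful

variable {F F' : C ⥤ D}

/-- The component at `Y` of the extension of a natural transformation defined on the
subcategory. -/
noncomputable def alphaApp (hspan : Spans P) (hF : IsLinearFunctor K F ∧ PreservesColimits F)
    (γ : ObjectProperty.ι P ⋙ F ⟶ ObjectProperty.ι P ⋙ F') (Y : C) :
    F.obj Y ⟶ F'.obj Y := by
  haveI := hF.2
  exact (isColimitOfPreserves F (pres hspan Y).isColimit).desc
    { pt := F'.obj Y
      ι :=
        { app := fun j => γ.app ((presΓ hspan Y).obj j) ≫ F'.map ((pres hspan Y).nat.app j)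
          naturality := fun j j' φ => by
            have hnat : (pres hspan Y).F.map φ ≫ (pres hspan Y).nat.app j' =
                (pres hspan Y).nat.app j := by
              have := (pres hspan Y).nat.naturality φ
              simpa using this
            have hγ' : F.map ((pres hspan Y).F.map φ) ≫ γ.app ((presΓ hspan Y).obj j') =
                γ.app ((presΓ hspan Y).obj j) ≫ F'.map ((pres hspan Y).F.map φ) :=
              γ.naturality ((presΓ hspan Y).map φ)
            show F.map ((pres hspan Y).F.map φ) ≫
                γ.app ((presΓ hspan Y).obj j') ≫ F'.map ((pres hspan Y).nat.app j') = _ ≫ 𝟙 _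
            rw [Category.comp_id, ← Category.assoc, hγ', Category.assoc, ← F'.map_comp]
            exact congrArg (fun t => γ.app ((presΓ hspan Y).obj j) ≫ F'.map t) hnat } }

lemma alphaApp_fac (hspan : Spans P) (hF : IsLinearFunctor K F ∧ PreservesColimits F)
    (γ : ObjectProperty.ι P ⋙ F ⟶ ObjectProperty.ι P ⋙ F') (Y : C)
    (j : (pres hspan Y).J) :
    F.map ((pres hspan Y).nat.app j) ≫ alphaApp hspan hF γ Y =
      γ.app ((presΓ hspan Y).obj j) ≫ F'.map ((pres hspan Y).nat.app j) := by
  haveI := hF.2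
  exact (isColimitOfPreserves F (pres hspan Y).isColimit).fac _ j

lemma alpha_key (htiny : ∀ X : C, P X → IsTiny K X) (hspan : Spans P) (hF : IsLinearFunctor K F ∧ PreservesColimits F)
    (hF' : IsLinearFunctor K F' ∧ PreservesColimits F')
    (γ : ObjectProperty.ι P ⋙ F ⟶ ObjectProperty.ι P ⋙ F')
    (X : ObjectProperty.FullSubcategory P) (Y : C) (g : X.obj ⟶ Y) :
    F.map g ≫ alphaApp hspan hF γ Y = γ.app X ≫ F'.map g := by
  have key := tiny_ext (htiny _ X.2) (pres hspan Y).isColimit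
    ((Linear.rightComp K _ (alphaApp hspan hF γ Y)).comp (mapLin hF.1 X.obj Y))
    ((Linear.leftComp K _ (γ.app X)).comp (mapLin hF'.1 X.obj Y))
    (fun j w => by
      show F.map (w ≫ (pres hspan Y).nat.app j) ≫ alphaApp hspan hF γ Y =
        γ.app X ≫ F'.map (w ≫ (pres hspan Y).nat.app j)
      have hγw : F.map w ≫ γ.app ((presΓ hspan Y).obj j) = γ.app X ≫ F'.map w :=
        γ.naturality (toΓ (X' := (presΓ hspan Y).obj j) w)
      rw [F.map_comp, Category.assoc, alphaApp_fac, ← Category.assoc, hγw,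
        Category.assoc, ← F'.map_comp])
  exact DFunLike.congr_fun key g

/-- The extension of a natural transformation defined on the subcategory. -/
noncomputable def alphaNat (htiny : ∀ X : C, P X → IsTiny K X) (hspan : Spans P) (hF : IsLinearFunctor K F ∧ PreservesColimits F)
    (hF' : IsLinearFunctor K F' ∧ PreservesColimits F')
    (γ : ObjectProperty.ι P ⋙ F ⟶ ObjectProperty.ι P ⋙ F') : F ⟶ F' where
  app := alphaApp hspan hF γ
  naturality Y Y' f := by
    haveI := hF.2
    apply (isColimitOfPreserves F (pres hspan Y).isColimit).hom_ext
    intro j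
    show F.map ((pres hspan Y).nat.app j) ≫ F.map f ≫ alphaApp hspan hF γ Y' =
      F.map ((pres hspan Y).nat.app j) ≫ alphaApp hspan hF γ Y ≫ F'.map f
    rw [← Category.assoc, ← F.map_comp,
      alpha_key htiny hspan hF hF' γ ((presΓ hspan Y).obj j) Y'
        ((pres hspan Y).nat.app j ≫ f),
      ← Category.assoc, alphaApp_fac, Category.assoc, ← F'.map_comp]

end FullFaithful

lemma R_full (htiny : ∀ X : C, P X → IsTiny K X) (hspan : Spans P) :
    (restrictionFunctor K C D P).Full := by
  constructor
  intro A B γ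
  have hA := A.2
  have hB := B.2
  let γ' : ObjectProperty.ι P ⋙ A.obj ⟶ ObjectProperty.ι P ⋙ B.obj := γ.hom
  refine ⟨ObjectProperty.homMk (alphaNat htiny hspan hA hB γ'), ?_⟩
  apply ObjectProperty.hom_ext
  show Functor.whiskerLeft (ObjectProperty.ι P) (alphaNat htiny hspan hA hB γ') = γ.hom
  apply NatTrans.ext
  funext X
  have h2 : alphaApp hspan hA γ' X.obj = γ'.app X := by
    have h := alpha_key htiny hspan hA hB γ' X X.obj (𝟙 X.obj)
    simpa using h
  exact h2

lemma R_faithful (htiny : ∀ X : C, P X → IsTiny K X) (hspan : Spans P) :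
    (restrictionFunctor K C D P).Faithful := by
  constructor
  intro A B α β h
  have hwh : ∀ X : ObjectProperty.FullSubcategory P, α.hom.app X.obj = β.hom.app X.obj := by
    intro X
    exact congrArg (fun t => NatTrans.app t.hom X) h
  haveI := A.2.2
  apply ObjectProperty.hom_ext
  apply NatTrans.ext
  funext Y
  apply (isColimitOfPreserves A.obj (pres hspan Y).isColimit).hom_ext
  intro j
  have h1 : A.obj.map ((pres hspan Y).nat.app j) ≫ α.hom.app Y =
      α.hom.app ((pres hspan Y).F.obj j) ≫ B.obj.map ((pres hspan Y).nat.app j) :=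
    α.hom.naturality _
  have h2 : A.obj.map ((pres hspan Y).nat.app j) ≫ β.hom.app Y =
      β.hom.app ((pres hspan Y).F.obj j) ≫ B.obj.map ((pres hspan Y).nat.app j) :=
    β.hom.naturality _
  show A.obj.map ((pres hspan Y).nat.app j) ≫ α.hom.app Y =
    A.obj.map ((pres hspan Y).nat.app j) ≫ β.hom.app Y
  rw [h1, h2]
  exact congrArg (fun t => t ≫ B.obj.map ((pres hspan Y).nat.app j))
    (hwh ((presΓ hspan Y).obj j))

lemma R_essSurj (htiny : ∀ X : C, P X → IsTiny K X) (hspan : Spans P) :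
    (restrictionFunctor K C D P).EssSurj := by
  constructor
  intro B
  have e : ObjectProperty.ι P ⋙ FF htiny hspan B.2 ≅ B.obj := etaIso htiny hspan B.2
  exact ⟨⟨FF htiny hspan B.2, FF_linear htiny hspan B.2, FF_preservesColimits htiny hspan B.2⟩,
    ⟨⟨ObjectProperty.homMk e.hom, ObjectProperty.homMk e.inv,
      ObjectProperty.hom_ext (h := e.hom_inv_id), ObjectProperty.hom_ext (h := e.inv_hom_id)⟩⟩⟩

end Stmt13

/-- If `Γ` is a small full subcategory of the cocomplete `K`-linear category `C` consisting of
tiny objects and spanning `C`, and `D` is any cocomplete `K`-linear category, then restriction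
along `Γ ↪ C` is an equivalence from colimit-preserving `K`-linear functors `C ⥤ D` to
`K`-linear functors `Γ ⥤ D`. -/
theorem statement13 [Small.{v} (Subtype P)]
    (htiny : ∀ X : C, P X → IsTiny K X) (hspan : Spans P) :
    (restrictionFunctor K C D P).IsEquivalence := by
  haveI := Stmt13.R_full (D := D) htiny hspan
  haveI := Stmt13.R_faithful (D := D) htiny hspan
  haveI := Stmt13.R_essSurj (D := D) htiny hspan
  constructor <;> assumption
end
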